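/- arXiv:1802.09932 — 4 statements merged into one kernel-verified Lean document; each statement's English description precedes it below -/
import Mathlib

section
/- Let f_i : ℝ^d → ℝ be convex and L-smooth for each i ∈ [n], let f = (1/n) ∑ f_i, and let x* be a minimizer of f. Then for any x, the average over i of ‖∇f_i(x) − ∇f_i(x*)‖² satisfies (1/n) ∑_{i=1}^n ‖∇f_i(x) − ∇f_i(x*)‖² ≤ 2L (f(x) − f(x*)). -/
open scoped BigOperators
open InnerProductSpace

local notation "⟪" x ", " y "⟫" => @inner ℝ _ _ x y

section aux
variable {E : Type*} [NormedAddCommGroup E] [InnerProductSpace ℝ E] [CompleteSpace E]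

lemma grad_inner_eq_fderiv (g : E → ℝ) (z v : E) :
    ⟪gradient g z, v⟫ = fderiv ℝ g z v := by
  simp [gradient, InnerProductSpace.toDual_symm_apply]

lemma hasDerivAt_line (g : E → ℝ) (hg : Differentiable ℝ g) (x v : E) (t : ℝ) :
    HasDerivAt (fun s : ℝ => g (x + s • v)) ⟪gradient g (x + t • v), v⟫ t := by
  have hc : HasDerivAt (fun s : ℝ => x + s • v) v t := by
    simpa using (((hasDerivAt_id t).smul_const v).const_add x)
  have := (hg (x + t • v)).hasFDerivAt.comp_hasDerivAt t hc
  rw [grad_inner_eq_fderiv]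
  exact this

lemma grad_continuous (g : E → ℝ) {L : ℝ} (hL : 0 < L)
    (hlip : ∀ a b, ‖gradient g a - gradient g b‖ ≤ L * ‖a - b‖) :
    Continuous fun z => gradient g z := by
  have : LipschitzWith L.toNNReal fun z => gradient g z := by
    apply LipschitzWith.of_dist_le_mul
    intro a b
    rw [dist_eq_norm, dist_eq_norm]
    simpa [Real.coe_toNNReal _ hL.le] using hlip a b
  exact this.continuous

lemma descent_lemma (g : E → ℝ) (hg : Differentiable ℝ g) {L : ℝ} (hL : 0 < L)
    (hlip : ∀ a b, ‖gradient g a - gradient g b‖ ≤ L * ‖a - b‖) (x y : E) :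
    g y ≤ g x + ⟪gradient g x, y - x⟫ + L / 2 * ‖y - x‖ ^ 2 := by
  set v := y - x with hv
  have hcont : Continuous fun t : ℝ => ⟪gradient g (x + t • v), v⟫ :=
    (Continuous.inner ((grad_continuous g hL hlip).comp (by continuity)) continuous_const)
  have key : g y - g x = ∫ t in (0:ℝ)..1, ⟪gradient g (x + t • v), v⟫ := by
    have := intervalIntegral.integral_eq_sub_of_hasDerivAt
      (f := fun s : ℝ => g (x + s • v)) (f' := fun t : ℝ => ⟪gradient g (x + t • v), v⟫)
      (by intro t ht; exact hasDerivAt_line g hg x v t)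
      (hcont.intervalIntegrable 0 1)
    rw [this]
    simp [hv]
  have bound : ∀ t ∈ Set.Icc (0:ℝ) 1,
      ⟪gradient g (x + t • v), v⟫ ≤ ⟪gradient g x, v⟫ + L * t * ‖v‖ ^ 2 := by
    intro t ht
    have h1 : ⟪gradient g (x + t • v) - gradient g x, v⟫
        ≤ ‖gradient g (x + t • v) - gradient g x‖ * ‖v‖ := real_inner_le_norm _ _
    have h2 : ‖gradient g (x + t • v) - gradient g x‖ ≤ L * (t * ‖v‖) := by
      have := hlip (x + t • v) x
      simpa [norm_smul, abs_of_nonneg ht.1, mul_assoc] using this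
    rw [inner_sub_left] at h1
    nlinarith [norm_nonneg v, norm_nonneg (gradient g (x + t • v) - gradient g x)]
  have hint : (∫ t in (0:ℝ)..1, ⟪gradient g (x + t • v), v⟫)
      ≤ ∫ t in (0:ℝ)..1, (⟪gradient g x, v⟫ + L * t * ‖v‖ ^ 2) := by
    apply intervalIntegral.integral_mono_on zero_le_one
      (hcont.intervalIntegrable 0 1)
      ((by continuity : Continuous fun t : ℝ => ⟪gradient g x, v⟫ + L * t * ‖v‖ ^ 2).intervalIntegrable 0 1)
    exact bound
  have hval : (∫ t in (0:ℝ)..1, (⟪gradient g x, v⟫ + L * t * ‖v‖ ^ 2))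
      = ⟪gradient g x, v⟫ + L / 2 * ‖v‖ ^ 2 := by
    have h2 : (∫ t in (0:ℝ)..1, L * t * ‖v‖ ^ 2) = L / 2 * ‖v‖ ^ 2 := by
      have he : (fun t : ℝ => L * t * ‖v‖ ^ 2) = fun t : ℝ => (L * ‖v‖ ^ 2) * t := by
        ext t; ring
      rw [he, intervalIntegral.integral_const_mul, integral_id]
      ring
    rw [intervalIntegral.integral_add (intervalIntegrable_const)
      (by apply Continuous.intervalIntegrable; continuity), h2,
      intervalIntegral.integral_const]
    simp
  linarith [key ▸ (hint.trans hval.le)]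

lemma first_order (g : E → ℝ) (hconv : ConvexOn ℝ Set.univ g) (hg : Differentiable ℝ g)
    (x y : E) : g y + ⟪gradient g y, x - y⟫ ≤ g x := by
  have hcv : ConvexOn ℝ Set.univ (fun s : ℝ => g (y + s • (x - y))) := by
    have h := hconv.comp_affineMap (AffineMap.lineMap y x)
    rw [Set.preimage_univ] at h
    have he : Set.EqOn (g ∘ (AffineMap.lineMap y x)) (fun s : ℝ => g (y + s • (x - y))) Set.univ := by
      intro s _
      simp [AffineMap.lineMap_apply, add_comm]
    exact h.congr he
  have hd := hasDerivAt_line g hg y (x - y) 0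
  have := hcv.le_slope_of_hasDerivAt (Set.mem_univ (0:ℝ)) (Set.mem_univ (1:ℝ)) zero_lt_one
    (by simpa using hd)
  simp [slope_def_field] at this
  have := grad_inner_eq_fderiv g y (x - y)
  rw [map_sub] at this
  linarith

lemma cocoercive (g : E → ℝ) (hconv : ConvexOn ℝ Set.univ g) (hg : Differentiable ℝ g)
    {L : ℝ} (hL : 0 < L)
    (hlip : ∀ a b, ‖gradient g a - gradient g b‖ ≤ L * ‖a - b‖) (x y : E) :
    ‖gradient g x - gradient g y‖ ^ 2 ≤ 2 * L * (g x - g y - ⟪gradient g y, x - y⟫) := by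
  set w := gradient g x - gradient g y with hw
  set z := x - L⁻¹ • w with hz
  have h1 := descent_lemma g hg hL hlip x z
  have h2 := first_order g hconv hg z y
  have hzx : z - x = -(L⁻¹ • w) := by rw [hz]; abel
  have hnorm : ‖z - x‖ ^ 2 = L⁻¹ ^ 2 * ‖w‖ ^ 2 := by
    rw [hzx, norm_neg, norm_smul]
    rw [Real.norm_eq_abs, abs_of_pos (inv_pos.2 hL)]
    ring
  have hinx : ⟪gradient g x, z - x⟫ = -(L⁻¹ * ⟪gradient g x, w⟫) := by
    rw [hzx, inner_neg_right, real_inner_smul_right]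
  have hiny : ⟪gradient g y, z - y⟫ = ⟪gradient g y, x - y⟫ - L⁻¹ * ⟪gradient g y, w⟫ := by
    have hzy : z - y = (x - y) - L⁻¹ • w := by rw [hz]; abel
    rw [hzy, inner_sub_right, real_inner_smul_right]
  have hww : ⟪gradient g x, w⟫ - ⟪gradient g y, w⟫ = ‖w‖ ^ 2 := by
    rw [← inner_sub_left, ← hw, real_inner_self_eq_norm_sq]
  rw [hinx, hnorm] at h1
  rw [hiny] at h2
  have hww' : L⁻¹ * ⟪gradient g x, w⟫ - L⁻¹ * ⟪gradient g y, w⟫ = L⁻¹ * ‖w‖ ^ 2 := by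
    rw [← mul_sub, hww]
  have hhalf : L / 2 * (L⁻¹ ^ 2 * ‖w‖ ^ 2) = 1 / 2 * (L⁻¹ * ‖w‖ ^ 2) := by
    field_simp
  have hcomb : 1 / 2 * (L⁻¹ * ‖w‖ ^ 2) ≤ g x - g y - ⟪gradient g y, x - y⟫ := by
    linarith
  have hfin := mul_le_mul_of_nonneg_left hcomb (by positivity : (0:ℝ) ≤ 2 * L)
  calc ‖w‖ ^ 2 = 2 * L * (1 / 2 * (L⁻¹ * ‖w‖ ^ 2)) := by
        field_simp
    _ ≤ 2 * L * (g x - g y - ⟪gradient g y, x - y⟫) := hfin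

end aux

/-- average co-coercivity bound at a minimizer. -/
theorem stmt_0 (d n : ℕ) (hn : 0 < n) (L : ℝ) (hL : 0 < L)
    (f : Fin n → EuclideanSpace ℝ (Fin d) → ℝ)
    (hconv : ∀ i, ConvexOn ℝ Set.univ (f i))
    (hdiff : ∀ i, Differentiable ℝ (f i))
    (hlip : ∀ i x y, ‖gradient (f i) x - gradient (f i) y‖ ≤ L * ‖x - y‖)
    (favg : EuclideanSpace ℝ (Fin d) → ℝ)
    (hfavg : ∀ x, favg x = (1 / n : ℝ) * ∑ i, f i x)
    (xstar : EuclideanSpace ℝ (Fin d))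
    (hmin : ∀ x, favg xstar ≤ favg x)
    (x : EuclideanSpace ℝ (Fin d)) :
    (1 / n : ℝ) * ∑ i, ‖gradient (f i) x - gradient (f i) xstar‖ ^ 2
      ≤ 2 * L * (favg x - favg xstar) := by
  have hn' : (0:ℝ) < (n:ℝ) := by exact_mod_cast hn
  have hco : ∀ i, ‖gradient (f i) x - gradient (f i) xstar‖ ^ 2
      ≤ 2 * L * (f i x - f i xstar - ⟪gradient (f i) xstar, x - xstar⟫) :=
    fun i => cocoercive (f i) (hconv i) (hdiff i) hL (hlip i) x xstar
  have hgradsum : ∑ i, ⟪gradient (f i) xstar, x - xstar⟫ = 0 := by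
    have hfe : favg = fun z => (1/n:ℝ) * ∑ i, f i z := funext hfavg
    have hfd : HasFDerivAt favg ((1/n : ℝ) • ∑ i, fderiv ℝ (f i) xstar) xstar := by
      rw [hfe]
      have hs : HasFDerivAt (fun z => ∑ i, f i z) (∑ i, fderiv ℝ (f i) xstar) xstar :=
        HasFDerivAt.fun_sum (fun i _ => (hdiff i xstar).hasFDerivAt)
      exact hs.const_mul (1/n : ℝ)
    have hloc : IsLocalMin favg xstar := Filter.Eventually.of_forall hmin
    have hzero : ((1/n : ℝ) • ∑ i, fderiv ℝ (f i) xstar) = 0 :=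
      hloc.hasFDerivAt_eq_zero hfd
    have happ := congrArg (fun D : EuclideanSpace ℝ (Fin d) →L[ℝ] ℝ => D (x - xstar)) hzero
    simp only [ContinuousLinearMap.smul_apply, ContinuousLinearMap.sum_apply,
      ContinuousLinearMap.zero_apply, smul_eq_mul] at happ
    have hne : (1/n : ℝ) ≠ 0 := by positivity
    have hs0 : ∑ i, fderiv ℝ (f i) xstar (x - xstar) = 0 := by
      rcases mul_eq_zero.1 happ with h | h
      · exact absurd h hne
      · exact h
    rw [← hs0]
    exact Finset.sum_congr rfl fun i _ => grad_inner_eq_fderiv (f i) xstar (x - xstar)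
  have hsum := Finset.sum_le_sum (fun i (_ : i ∈ Finset.univ) => hco i)
  have hexp : ∑ i, (2 * L * (f i x - f i xstar - ⟪gradient (f i) xstar, x - xstar⟫))
      = 2 * L * (∑ i, f i x - ∑ i, f i xstar) := by
    rw [← Finset.mul_sum, Finset.sum_sub_distrib, Finset.sum_sub_distrib, hgradsum]
    ring
  rw [hfavg x, hfavg xstar]
  calc (1/n:ℝ) * ∑ i, ‖gradient (f i) x - gradient (f i) xstar‖ ^ 2
      ≤ (1/n:ℝ) * (2 * L * (∑ i, f i x - ∑ i, f i xstar)) := by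
        apply mul_le_mul_of_nonneg_left (hsum.trans_eq hexp) (by positivity)
    _ = 2 * L * ((1/n:ℝ) * ∑ i, f i x - (1/n:ℝ) * ∑ i, f i xstar) := by ring
end

section
/- Let f_i : ℝ^d → ℝ be convex and L-smooth for each i ∈ [n], let f = (1/n)∑ f_i with minimizer x*. For fixed points x and x̃, define for each i the variance-reduced estimator g_i = ∇f_i(x) − ∇f_i(x̃) + ∇f(x̃). Then (1/n) ∑_{i=1}^n ‖g_i − ∇f(x)‖² ≤ 4L [ f(x) − f(x*) + f(x̃) − f(x*) ]. -/
open scoped BigOperators RealInnerProductSpace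

variable {F : Type*} [NormedAddCommGroup F] [InnerProductSpace ℝ F] [CompleteSpace F]

/-- derivative of t ↦ g (y + t • v) -/
lemma aux_hasDerivAt (g : F → ℝ) (hd : Differentiable ℝ g) (y v : F) (t : ℝ) :
    HasDerivAt (fun t : ℝ => g (y + t • v)) ⟪gradient g (y + t • v), v⟫ t := by
  have hc : HasDerivAt (fun t : ℝ => y + t • v) v t := by
    simpa using ((hasDerivAt_id t).smul_const v).const_add y
  have hg : HasFDerivAt g (InnerProductSpace.toDual ℝ F (gradient g (y + t • v))) (y + t • v) :=
    ((hd _).hasGradientAt).hasFDerivAt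
  have h := hg.comp_hasDerivAt t hc
  simp at h ⊢
  exact h

/-- convexity first-order lower bound -/
lemma aux_convex_lb (g : F → ℝ) (hg : ConvexOn ℝ Set.univ g) (hd : Differentiable ℝ g)
    (y z : F) : g y + ⟪gradient g y, z - y⟫ ≤ g z := by
  set φ : ℝ → ℝ := fun t => g (y + t • (z - y)) with hφ
  have hconv : ConvexOn ℝ Set.univ φ := by
    have h := hg.comp_affineMap (AffineMap.lineMap y z : ℝ →ᵃ[ℝ] F)
    have he : φ = (g ∘ (AffineMap.lineMap y z : ℝ →ᵃ[ℝ] F)) := by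
      funext t; simp [φ, AffineMap.lineMap_apply, add_comm]
    rw [he]; simpa using h
  have hd0 : HasDerivAt φ ⟪gradient g (y + (0:ℝ) • (z - y)), z - y⟫ 0 :=
    aux_hasDerivAt g hd y (z - y) 0
  have h := hconv.le_slope_of_hasDerivAt (Set.mem_univ (0:ℝ)) (Set.mem_univ (1:ℝ))
    one_pos hd0
  have hs : slope φ 0 1 = φ 1 - φ 0 := by simp [slope_def_field]
  have h0 : φ 0 = g y := by simp [φ]
  have h1 : φ 1 = g z := by simp [φ]
  rw [hs, h0, h1] at h
  simp only [zero_smul, add_zero] at h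
  linarith

/-- descent lemma -/
lemma aux_descent (g : F → ℝ) (hd : Differentiable ℝ g) (L : ℝ) (hL : 0 < L)
    (hlip : ∀ a b, ‖gradient g a - gradient g b‖ ≤ L * ‖a - b‖) (x v : F) :
    g (x + v) ≤ g x + ⟪gradient g x, v⟫ + L / 2 * ‖v‖ ^ 2 := by
  set ψ : ℝ → ℝ := fun t => g (x + t • v) - t * ⟪gradient g x, v⟫ - L * t ^ 2 / 2 * ‖v‖ ^ 2
    with hψ
  have hψd : ∀ t : ℝ, HasDerivAt ψ
      (⟪gradient g (x + t • v), v⟫ - ⟪gradient g x, v⟫ - L * t * ‖v‖ ^ 2) t := by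
    intro t
    have h1 := aux_hasDerivAt g hd x v t
    have h2 : HasDerivAt (fun t : ℝ => t * ⟪gradient g x, v⟫) ⟪gradient g x, v⟫ t := by
      simpa using (hasDerivAt_id t).mul_const ⟪gradient g x, v⟫
    have h3 : HasDerivAt (fun t : ℝ => L * t ^ 2 / 2 * ‖v‖ ^ 2) (L * t * ‖v‖ ^ 2) t := by
      have : HasDerivAt (fun t : ℝ => t ^ 2) (2 * t) t := by simpa using hasDerivAt_pow 2 t
      have := ((this.const_mul L).div_const 2).mul_const (‖v‖ ^ 2)
      convert this using 1
      · rfl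
      · rfl
      ring
    exact (h1.sub h2).sub h3
  have hanti : AntitoneOn ψ (Set.Icc 0 1) := by
    apply antitoneOn_of_deriv_nonpos (convex_Icc 0 1)
    · exact (Continuous.continuousOn (by
        exact ((hd.continuous.comp (by continuity)).sub (by continuity)).sub (by continuity)))
    · intro t ht
      exact ((hψd t).differentiableAt).differentiableWithinAt
    · intro t ht
      rw [interior_Icc] at ht
      rw [(hψd t).deriv]
      have hip : ⟪gradient g (x + t • v) - gradient g x, v⟫ ≤ L * t * ‖v‖ ^ 2 := by
        calc ⟪gradient g (x + t • v) - gradient g x, v⟫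
            ≤ ‖gradient g (x + t • v) - gradient g x‖ * ‖v‖ := real_inner_le_norm _ _
          _ ≤ (L * ‖(x + t • v) - x‖) * ‖v‖ := by
              gcongr; exact hlip _ _
          _ = L * t * ‖v‖ ^ 2 := by
              rw [show (x + t • v) - x = t • v by abel, norm_smul]
              simp [abs_of_pos ht.1]
              ring
      rw [inner_sub_left] at hip
      linarith
  have h01 := hanti (Set.mem_Icc.2 ⟨le_refl 0, zero_le_one⟩)
    (Set.mem_Icc.2 ⟨zero_le_one, le_refl 1⟩) zero_le_one
  simp only [ψ, zero_smul, add_zero, one_smul, zero_mul, zero_pow, mul_zero, sub_zero,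
    one_mul, one_pow, zero_div] at h01
  have : L * 1 / 2 * ‖v‖ ^ 2 = L / 2 * ‖v‖ ^ 2 := by ring
  linarith [h01]

/-- key coercivity inequality -/
lemma aux_key (g : F → ℝ) (hg : ConvexOn ℝ Set.univ g) (hd : Differentiable ℝ g)
    (L : ℝ) (hL : 0 < L)
    (hlip : ∀ a b, ‖gradient g a - gradient g b‖ ≤ L * ‖a - b‖) (x y : F) :
    ‖gradient g x - gradient g y‖ ^ 2 ≤ 2 * L * (g x - g y - ⟪gradient g y, x - y⟫) := by
  set w := gradient g x - gradient g y with hw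
  set v := -(L⁻¹ • w) with hv
  have h1 : g y + ⟪gradient g y, (x + v) - y⟫ ≤ g (x + v) := aux_convex_lb g hg hd y (x + v)
  have h2 : g (x + v) ≤ g x + ⟪gradient g x, v⟫ + L / 2 * ‖v‖ ^ 2 :=
    aux_descent g hd L hL hlip x v
  have e1 : ⟪gradient g y, (x + v) - y⟫ = ⟪gradient g y, x - y⟫ + ⟪gradient g y, v⟫ := by
    rw [show (x + v) - y = (x - y) + v by abel, inner_add_right]
  have e2 : ⟪gradient g x, v⟫ - ⟪gradient g y, v⟫ = -(L⁻¹ * ‖w‖ ^ 2) := by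
    rw [← inner_sub_left, ← hw, hv, inner_neg_right, real_inner_smul_right,
      real_inner_self_eq_norm_sq]
  have e3 : ‖v‖ ^ 2 = L⁻¹ ^ 2 * ‖w‖ ^ 2 := by
    rw [hv, norm_neg, norm_smul, Real.norm_eq_abs, abs_inv, abs_of_pos hL]
    ring
  have hLne : L ≠ 0 := ne_of_gt hL
  have : L / 2 * ‖v‖ ^ 2 = (1 / (2 * L)) * ‖w‖ ^ 2 := by
    rw [e3]; field_simp
  have e4 : L⁻¹ * ‖w‖ ^ 2 - 1 / (2 * L) * ‖w‖ ^ 2 = 1 / (2 * L) * ‖w‖ ^ 2 := by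
    field_simp; ring
  have h4 : 1 / (2 * L) * ‖w‖ ^ 2 ≤ g x - g y - ⟪gradient g y, x - y⟫ := by linarith
  calc ‖w‖ ^ 2 = 2 * L * (1 / (2 * L) * ‖w‖ ^ 2) := by field_simp
    _ ≤ 2 * L * (g x - g y - ⟪gradient g y, x - y⟫) :=
        mul_le_mul_of_nonneg_left h4 (by positivity)

lemma aux_toDual_gradient (g : F → ℝ) (x : F) :
    InnerProductSpace.toDual ℝ F (gradient g x) = fderiv ℝ g x := by
  rw [gradient]
  exact (InnerProductSpace.toDual ℝ F).apply_symm_apply _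

lemma aux_two (u v : F) : ‖u - v‖ ^ 2 ≤ 2 * ‖u‖ ^ 2 + 2 * ‖v‖ ^ 2 := by
  have h := norm_sub_le u v
  nlinarith [norm_nonneg u, norm_nonneg v, sq_nonneg (‖u‖ - ‖v‖), norm_nonneg (u - v)]

lemma aux_var (n : ℕ) (hn : 0 < n) (A : Fin n → F) :
    ∑ i, ‖A i - (1 / n : ℝ) • ∑ j, A j‖ ^ 2 ≤ ∑ i, ‖A i‖ ^ 2 := by
  have hn' : (0:ℝ) < n := Nat.cast_pos.mpr hn
  set S : F := (1 / n : ℝ) • ∑ j, A j with hS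
  have hsum : ∑ j, A j = (n : ℝ) • S := by
    rw [hS, smul_smul]
    rw [show (n : ℝ) * (1 / n) = 1 by field_simp, one_smul]
  have hkey : ∑ i, ‖A i - S‖ ^ 2
      = ∑ i, ‖A i‖ ^ 2 - 2 * ((n:ℝ) * ‖S‖ ^ 2) + (n:ℝ) * ‖S‖ ^ 2 := by
    calc ∑ i, ‖A i - S‖ ^ 2
        = ∑ i, (‖A i‖ ^ 2 - 2 * ⟪A i, S⟫ + ‖S‖ ^ 2) := by
          exact Finset.sum_congr rfl fun i _ => norm_sub_sq_real _ _
      _ = (∑ i, ‖A i‖ ^ 2 - ∑ i, 2 * ⟪A i, S⟫) + ∑ i, ‖S‖ ^ 2 := by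
          rw [Finset.sum_add_distrib, Finset.sum_sub_distrib]
      _ = ∑ i, ‖A i‖ ^ 2 - 2 * ((n:ℝ) * ‖S‖ ^ 2) + (n:ℝ) * ‖S‖ ^ 2 := by
          rw [← Finset.mul_sum, ← sum_inner, hsum, real_inner_smul_left,
            real_inner_self_eq_norm_sq, Finset.sum_const, Finset.card_univ,
            Fintype.card_fin, nsmul_eq_mul]
  rw [hkey]
  nlinarith [sq_nonneg ‖S‖, hn']

/-- variance bound for the SVRG gradient estimator. -/
theorem stmt_1 (d n : ℕ) (hn : 0 < n) (L : ℝ) (hL : 0 < L)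
    (f : Fin n → EuclideanSpace ℝ (Fin d) → ℝ)
    (hconv : ∀ i, ConvexOn ℝ Set.univ (f i))
    (hdiff : ∀ i, Differentiable ℝ (f i))
    (hlip : ∀ i x y, ‖gradient (f i) x - gradient (f i) y‖ ≤ L * ‖x - y‖)
    (favg : EuclideanSpace ℝ (Fin d) → ℝ)
    (hfavg : ∀ x, favg x = (1 / n : ℝ) * ∑ i, f i x)
    (xstar : EuclideanSpace ℝ (Fin d))
    (hmin : ∀ x, favg xstar ≤ favg x)
    (x xt : EuclideanSpace ℝ (Fin d)) :
    (1 / n : ℝ) * ∑ i,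
        ‖(gradient (f i) x - gradient (f i) xt + gradient favg xt) - gradient favg x‖ ^ 2
      ≤ 4 * L * ((favg x - favg xstar) + (favg xt - favg xstar)) := by
  classical
  have hn' : (0:ℝ) < n := Nat.cast_pos.mpr hn
  set c : ℝ := 1 / n with hc
  have hc0 : 0 < c := by positivity
  have hcn : c * n = 1 := by rw [hc]; field_simp
  -- gradient of favg
  have hGrad : ∀ z, HasGradientAt favg (c • ∑ i, gradient (f i) z) z := by
    intro z
    rw [hasGradientAt_iff_hasFDerivAt]
    have hsum : HasFDerivAt (fun w => ∑ i, f i w) (∑ i, fderiv ℝ (f i) z) z :=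
      HasFDerivAt.fun_sum fun i _ => ((hdiff i) z).hasFDerivAt
    have h2 := hsum.const_mul c
    have hfe : favg = fun w => c * ∑ i, f i w := funext fun w => hfavg w
    rw [hfe]
    convert h2 using 1
    · rfl
    rw [map_smul, map_sum]
    congr 1
    exact Finset.sum_congr rfl fun i _ => aux_toDual_gradient (f i) z
  have hGeq : ∀ z, gradient favg z = c • ∑ i, gradient (f i) z := fun z => (hGrad z).gradient
  -- gradient at xstar is 0
  have hmin' : IsLocalMin favg xstar := Filter.Eventually.of_forall hmin
  have hG0 : gradient favg xstar = 0 := by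
    rw [gradient, hmin'.fderiv_eq_zero, map_zero]
  have hsum0 : ∑ i, gradient (f i) xstar = 0 := by
    have h := (hGeq xstar).symm
    rw [hG0] at h
    rcases smul_eq_zero.mp h with h' | h'
    · exact absurd h' (ne_of_gt hc0)
    · exact h'
  -- abbreviations
  set A : Fin n → EuclideanSpace ℝ (Fin d) :=
    fun i => gradient (f i) x - gradient (f i) xstar with hA
  set B : Fin n → EuclideanSpace ℝ (Fin d) :=
    fun i => gradient (f i) xt - gradient (f i) xstar with hB
  set Sa : EuclideanSpace ℝ (Fin d) := c • ∑ j, A j with hSa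
  set Sb : EuclideanSpace ℝ (Fin d) := c • ∑ j, B j with hSb
  -- sums of f at points
  have hsx : ∑ i, f i x = (n:ℝ) * favg x := by rw [hfavg x, hc]; field_simp
  have hsxt : ∑ i, f i xt = (n:ℝ) * favg xt := by rw [hfavg xt, hc]; field_simp
  have hsxs : ∑ i, f i xstar = (n:ℝ) * favg xstar := by rw [hfavg xstar, hc]; field_simp
  -- per-index key bound and its sums
  have hSA : ∑ i, ‖A i‖ ^ 2 ≤ 2 * L * ((n:ℝ) * (favg x - favg xstar)) := by
    calc ∑ i, ‖A i‖ ^ 2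
        ≤ ∑ i, 2 * L * (f i x - f i xstar - ⟪gradient (f i) xstar, x - xstar⟫) :=
          Finset.sum_le_sum fun i _ =>
            aux_key (f i) (hconv i) (hdiff i) L hL (hlip i) x xstar
      _ = 2 * L * ((∑ i, f i x - ∑ i, f i xstar)
            - ⟪∑ i, gradient (f i) xstar, x - xstar⟫) := by
          rw [← Finset.mul_sum, Finset.sum_sub_distrib, Finset.sum_sub_distrib, ← sum_inner]
      _ = 2 * L * ((n:ℝ) * (favg x - favg xstar)) := by
          rw [hsum0, inner_zero_left, hsx, hsxs]; ring
  have hSB : ∑ i, ‖B i‖ ^ 2 ≤ 2 * L * ((n:ℝ) * (favg xt - favg xstar)) := by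
    calc ∑ i, ‖B i‖ ^ 2
        ≤ ∑ i, 2 * L * (f i xt - f i xstar - ⟪gradient (f i) xstar, xt - xstar⟫) :=
          Finset.sum_le_sum fun i _ =>
            aux_key (f i) (hconv i) (hdiff i) L hL (hlip i) xt xstar
      _ = 2 * L * ((∑ i, f i xt - ∑ i, f i xstar)
            - ⟪∑ i, gradient (f i) xstar, xt - xstar⟫) := by
          rw [← Finset.mul_sum, Finset.sum_sub_distrib, Finset.sum_sub_distrib, ← sum_inner]
      _ = 2 * L * ((n:ℝ) * (favg xt - favg xstar)) := by
          rw [hsum0, inner_zero_left, hsxt, hsxs]; ring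
  -- variance bounds
  have hvarA : ∑ i, ‖A i - Sa‖ ^ 2 ≤ ∑ i, ‖A i‖ ^ 2 := aux_var n hn A
  have hvarB : ∑ i, ‖B i - Sb‖ ^ 2 ≤ ∑ i, ‖B i‖ ^ 2 := aux_var n hn B
  -- rewrite each term
  have hSab : gradient favg xt - gradient favg x = Sb - Sa := by
    rw [hGeq xt, hGeq x, hSa, hSb, ← smul_sub, ← smul_sub, ← Finset.sum_sub_distrib,
      ← Finset.sum_sub_distrib]
    congr 1
    apply Finset.sum_congr rfl
    intro i _
    simp only [hA, hB]
    abel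
  have hterm : ∀ i : Fin n,
      (gradient (f i) x - gradient (f i) xt + gradient favg xt) - gradient favg x
        = (A i - Sa) - (B i - Sb) := by
    intro i
    have h1 : (gradient (f i) x - gradient (f i) xt + gradient favg xt) - gradient favg x
        = (A i - B i) + (gradient favg xt - gradient favg x) := by
      simp only [hA, hB]; abel
    rw [h1, hSab]
    abel
  -- assemble
  have hmain : ∑ i,
      ‖(gradient (f i) x - gradient (f i) xt + gradient favg xt) - gradient favg x‖ ^ 2
      ≤ 4 * L * ((n:ℝ) * (favg x - favg xstar)) + 4 * L * ((n:ℝ) * (favg xt - favg xstar)) := by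
    calc ∑ i,
        ‖(gradient (f i) x - gradient (f i) xt + gradient favg xt) - gradient favg x‖ ^ 2
        = ∑ i, ‖(A i - Sa) - (B i - Sb)‖ ^ 2 :=
          Finset.sum_congr rfl fun i _ => by rw [hterm i]
      _ ≤ ∑ i, (2 * ‖A i - Sa‖ ^ 2 + 2 * ‖B i - Sb‖ ^ 2) :=
          Finset.sum_le_sum fun i _ => aux_two _ _
      _ = 2 * ∑ i, ‖A i - Sa‖ ^ 2 + 2 * ∑ i, ‖B i - Sb‖ ^ 2 := by
          rw [Finset.sum_add_distrib, ← Finset.mul_sum, ← Finset.mul_sum]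
      _ ≤ 2 * (2 * L * ((n:ℝ) * (favg x - favg xstar)))
            + 2 * (2 * L * ((n:ℝ) * (favg xt - favg xstar))) := by
          have t1 := hvarA.trans hSA
          have t2 := hvarB.trans hSB
          linarith
      _ = 4 * L * ((n:ℝ) * (favg x - favg xstar)) + 4 * L * ((n:ℝ) * (favg xt - favg xstar)) := by
          ring
  have hfin := mul_le_mul_of_nonneg_left hmain (le_of_lt hc0)
  calc c * ∑ i,
      ‖(gradient (f i) x - gradient (f i) xt + gradient favg xt) - gradient favg x‖ ^ 2
      ≤ c * (4 * L * ((n:ℝ) * (favg x - favg xstar))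
          + 4 * L * ((n:ℝ) * (favg xt - favg xstar))) := hfin
    _ = (c * (n:ℝ)) * (4 * L * ((favg x - favg xstar) + (favg xt - favg xstar))) := by ring
    _ = 4 * L * ((favg x - favg xstar) + (favg xt - favg xstar)) := by rw [hcn, one_mul]
end

section
/- One-step inner bound for smooth VR-SGD: Let each f_i be convex and L-smooth, f = (1/n)∑f_i with minimizer x*, and let η = 1/(Lβ) with β > 1. Given x_k and snapshot x̃, let g_i = ∇f_i(x_k) − ∇f_i(x̃) + ∇f(x̃) and x_{k+1}^{(i)} = x_k − η g_i for a uniformly random index i. Then E[f(x_{k+1}^{(i)})] − f(x*) ≤ (2/(β−1))[f(x_k) − f(x*) + f(x̃) − f(x*)] + (Lβ/2) E[‖x* − x_k‖² − ‖x* − x_{k+1}^{(i)}‖²]. -/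
open scoped BigOperators

section Aux
variable {F : Type*} [NormedAddCommGroup F] [InnerProductSpace ℝ F] [CompleteSpace F]
local notation "⟪" x ", " y "⟫" => @inner ℝ _ _ x y

lemma my_young (a b c : ℝ) (hc : 0 < c) : a * b ≤ 1 / (2 * c) * a ^ 2 + c / 2 * b ^ 2 := by
  have h : 1 / (2 * c) * a ^ 2 + c / 2 * b ^ 2 - a * b = (a - c * b) ^ 2 / (2 * c) := by
    field_simp; ring
  have h2 : (0:ℝ) ≤ (a - c * b) ^ 2 / (2 * c) := by positivity
  linarith

end Aux

section Aux2
variable {F : Type*} [NormedAddCommGroup F] [InnerProductSpace ℝ F] [CompleteSpace F]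
local notation "⟪" x ", " y "⟫" => @inner ℝ _ _ x y


lemma my_hasGradientAt_inner (c x : F) : HasGradientAt (fun z => ⟪c, z⟫) c x := by
  have h := (InnerProductSpace.toDual ℝ F c).hasFDerivAt (x := x)
  rw [hasGradientAt_iff_hasFDerivAt]
  exact h

lemma my_hasGradientAt_sub {f g : F → ℝ} {a b x : F} (hf : HasGradientAt f a x)
    (hg : HasGradientAt g b x) : HasGradientAt (fun z => f z - g z) (a - b) x := by
  rw [hasGradientAt_iff_hasFDerivAt] at *
  rw [map_sub]
  exact hf.sub hg

lemma my_hasGradientAt_sum {ι : Type*} (s : Finset ι) {f : ι → F → ℝ} {g : ι → F} {x : F}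
    (hf : ∀ i ∈ s, HasGradientAt (f i) (g i) x) :
    HasGradientAt (fun z => ∑ i ∈ s, f i z) (∑ i ∈ s, g i) x := by
  rw [hasGradientAt_iff_hasFDerivAt, map_sum]
  exact HasFDerivAt.fun_sum fun i hi => (hf i hi).hasFDerivAt

lemma my_hasGradientAt_const_mul {f : F → ℝ} {a x : F} (c : ℝ) (hf : HasGradientAt f a x) :
    HasGradientAt (fun z => c * f z) (c • a) x := by
  rw [hasGradientAt_iff_hasFDerivAt, map_smul]
  exact hf.hasFDerivAt.const_mul c

/-- directional derivative along a line -/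
lemma my_hasDerivAt_line {f : F → ℝ} (hf : Differentiable ℝ f) (x v : F) (t : ℝ) :
    HasDerivAt (fun s : ℝ => f (x + s • v)) ⟪gradient f (x + t • v), v⟫ t := by
  have hc : HasDerivAt (fun s : ℝ => x + s • v) v t := by
    simpa using ((hasDerivAt_id t).smul_const v).const_add x
  have hfd := (hf (x + t • v)).hasGradientAt.hasFDerivAt
  have := hfd.comp_hasDerivAt t hc
  simpa [Function.comp_def] using this

/-- first-order condition for convex differentiable functions -/
lemma my_convex_first_order {f : F → ℝ} (hc : ConvexOn ℝ Set.univ f)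
    (hf : Differentiable ℝ f) (x y : F) :
    f x + ⟪gradient f x, y - x⟫ ≤ f y := by
  rcases eq_or_ne y x with rfl | hne
  · simp
  · set g : ℝ → ℝ := fun s => f (x + s • (y - x)) with hg
    have hgc : ConvexOn ℝ Set.univ g := by
      have := hc.comp_affineMap (AffineMap.lineMap x y : ℝ →ᵃ[ℝ] F)
      have heq : g = f ∘ (AffineMap.lineMap x y : ℝ →ᵃ[ℝ] F) := by
        funext s
        simp only [hg, Function.comp_apply, AffineMap.lineMap_apply_module]
        congr 1
        module
      rw [heq]
      simpa using this
    have hd0 : HasDerivAt g ⟪gradient f (x + (0:ℝ) • (y - x)), y - x⟫ 0 :=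
      my_hasDerivAt_line hf x (y - x) 0
    have hslope := hgc.le_slope_of_hasDerivAt (Set.mem_univ 0) (Set.mem_univ 1)
      one_pos hd0
    have : slope g 0 1 = g 1 - g 0 := by simp [slope_def_field]
    rw [this] at hslope
    have hy : g 1 = f y := by simp [hg]
    have hx : g 0 = f x := by simp [hg]
    simp only [zero_smul, add_zero] at hslope
    rw [hy, hx] at hslope
    linarith

/-- descent lemma -/
lemma my_descent {f : F → ℝ} {L : ℝ} (hL : 0 ≤ L) (hf : Differentiable ℝ f)
    (hlip : ∀ a b, ‖gradient f a - gradient f b‖ ≤ L * ‖a - b‖) (x y : F) :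
    f y ≤ f x + ⟪gradient f x, y - x⟫ + L / 2 * ‖y - x‖ ^ 2 := by
  set v := y - x with hv
  have hgradcont : Continuous (gradient f) := by
    have : LipschitzWith (Real.toNNReal L) (gradient f) := by
      apply LipschitzWith.of_dist_le_mul
      intro a b
      rw [dist_eq_norm, dist_eq_norm]
      calc ‖gradient f a - gradient f b‖ ≤ L * ‖a - b‖ := hlip a b
        _ ≤ (Real.toNNReal L : ℝ) * ‖a - b‖ := by
            gcongr; exact Real.le_coe_toNNReal L
    exact this.continuous
  have hφcont : Continuous fun t : ℝ => ⟪gradient f (x + t • v), v⟫ := by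
    exact (hgradcont.comp (by continuity)).inner continuous_const
  have hftc : f (x + (1:ℝ) • v) - f (x + (0:ℝ) • v)
      = ∫ t in (0:ℝ)..1, ⟪gradient f (x + t • v), v⟫ := by
    exact (intervalIntegral.integral_eq_sub_of_hasDerivAt
      (f := fun s : ℝ => f (x + s • v))
      (f' := fun t => ⟪gradient f (x + t • v), v⟫)
      (fun t _ => my_hasDerivAt_line hf x v t)
      (hφcont.intervalIntegrable 0 1)).symm
  have hbound : (∫ t in (0:ℝ)..1, ⟪gradient f (x + t • v), v⟫)
      ≤ ∫ t in (0:ℝ)..1, (⟪gradient f x, v⟫ + L * t * ‖v‖ ^ 2) := by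
    apply intervalIntegral.integral_mono_on zero_le_one
      (hφcont.intervalIntegrable 0 1)
      ((by continuity : Continuous fun t : ℝ => ⟪gradient f x, v⟫ + L * t * ‖v‖ ^ 2).intervalIntegrable 0 1)
    intro t ht
    have h1 : ⟪gradient f (x + t • v), v⟫ - ⟪gradient f x, v⟫
        = ⟪gradient f (x + t • v) - gradient f x, v⟫ := by
      rw [inner_sub_left]
    have h2 : ⟪gradient f (x + t • v) - gradient f x, v⟫ ≤ L * t * ‖v‖ ^ 2 := by
      calc ⟪gradient f (x + t • v) - gradient f x, v⟫
          ≤ ‖gradient f (x + t • v) - gradient f x‖ * ‖v‖ := real_inner_le_norm _ _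
        _ ≤ (L * ‖(x + t • v) - x‖) * ‖v‖ := by
            exact mul_le_mul_of_nonneg_right (hlip _ _) (norm_nonneg v)
        _ = L * t * ‖v‖ ^ 2 := by
            rw [add_sub_cancel_left, norm_smul, Real.norm_eq_abs,
              abs_of_nonneg ht.1]; ring
    linarith
  have hval : (∫ t in (0:ℝ)..1, (⟪gradient f x, v⟫ + L * t * ‖v‖ ^ 2))
      = ⟪gradient f x, v⟫ + L / 2 * ‖v‖ ^ 2 := by
    rw [intervalIntegral.integral_add (intervalIntegrable_const)
      ((show Continuous fun t : ℝ => L * t * ‖v‖ ^ 2 by continuity).intervalIntegrable 0 1)]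
    simp only [intervalIntegral.integral_const, smul_eq_mul]
    have : (∫ t in (0:ℝ)..1, L * t * ‖v‖ ^ 2) = L / 2 * ‖v‖ ^ 2 := by
      have : (fun t : ℝ => L * t * ‖v‖ ^ 2) = fun t : ℝ => (L * ‖v‖ ^ 2) * t := by
        funext t; ring
      rw [this, intervalIntegral.integral_const_mul, integral_id]
      ring
    rw [this]; ring
  have hx0 : x + (0:ℝ) • v = x := by simp
  have hx1 : x + (1:ℝ) • v = y := by simp [hv]
  rw [hx0, hx1] at hftc
  linarith

/-- cocoercivity-type bound -/
lemma my_coco {f : F → ℝ} {L : ℝ} (hL : 0 < L) (hc : ConvexOn ℝ Set.univ f)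
    (hf : Differentiable ℝ f)
    (hlip : ∀ a b, ‖gradient f a - gradient f b‖ ≤ L * ‖a - b‖) (x y : F) :
    ‖gradient f x - gradient f y‖ ^ 2 ≤ 2 * L * (f x - f y - ⟪gradient f y, x - y⟫) := by
  set c := gradient f y with hcdef
  set φ : F → ℝ := fun z => f z - ⟪c, z⟫ with hφ
  have hφgrad : ∀ z, HasGradientAt φ (gradient f z - c) z := fun z =>
    my_hasGradientAt_sub (hf z).hasGradientAt (my_hasGradientAt_inner c z)
  have hφgrad' : ∀ z, gradient φ z = gradient f z - c := fun z => (hφgrad z).gradient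
  have hφdiff : Differentiable ℝ φ := fun z => ((hφgrad z).differentiableAt)
  have hφlip : ∀ a b, ‖gradient φ a - gradient φ b‖ ≤ L * ‖a - b‖ := by
    intro a b
    rw [hφgrad', hφgrad']
    simpa using hlip a b
  -- φ y ≤ φ z for all z, by convex first-order of f at y
  have hφmin : ∀ z, φ y ≤ φ z := by
    intro z
    have := my_convex_first_order hc hf y z
    simp only [hφ]
    rw [inner_sub_right] at this
    linarith
  set u := gradient f x - c with hu
  set z := x - (1 / L) • u with hz
  have hd := my_descent hL.le hφdiff hφlip x z
  rw [hφgrad'] at hd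
  have h1 : ⟪gradient f x - c, z - x⟫ = -(1 / L) * ‖u‖ ^ 2 := by
    have : z - x = -((1 / L) • u) := by rw [hz]; abel
    rw [this, inner_neg_right, real_inner_smul_right, real_inner_self_eq_norm_sq, ← hu]
    ring
  have h2 : ‖z - x‖ ^ 2 = (1 / L) ^ 2 * ‖u‖ ^ 2 := by
    have : z - x = -((1 / L) • u) := by rw [hz]; abel
    rw [this, norm_neg, norm_smul, Real.norm_eq_abs, mul_pow, sq_abs]
  have h3 : φ y ≤ φ z := hφmin z
  rw [h1, h2] at hd
  have h4 : φ x - φ y = f x - f y - ⟪c, x - y⟫ := by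
    simp only [hφ]
    rw [inner_sub_right]
    ring
  have hL' : (1 : ℝ) / L > 0 := by positivity
  clear_value z u φ c
  have key : φ y ≤ φ x - 1 / (2 * L) * ‖u‖ ^ 2 := by
    have e1 : L / 2 * ((1 / L) ^ 2 * ‖u‖ ^ 2) = 1 / (2 * L) * ‖u‖ ^ 2 := by
      field_simp
    have e2 : (1 / L) * ‖u‖ ^ 2 = 2 * (1 / (2 * L) * ‖u‖ ^ 2) := by
      field_simp
    linarith [hd, h3]
  have : 1 / (2 * L) * ‖u‖ ^ 2 ≤ f x - f y - ⟪c, x - y⟫ := by linarith [key, h4.ge, h4.le]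
  calc ‖u‖ ^ 2 = 2 * L * (1 / (2 * L) * ‖u‖ ^ 2) := by field_simp
    _ ≤ 2 * L * (f x - f y - ⟪c, x - y⟫) := by
        have h2L : (0:ℝ) < 2 * L := by linarith
        exact mul_le_mul_of_nonneg_left this h2L.le


lemma my_convexOn_sum {ι : Type*} (s : Finset ι) (f : ι → F → ℝ)
    (h : ∀ i ∈ s, ConvexOn ℝ Set.univ (f i)) :
    ConvexOn ℝ Set.univ (fun z => ∑ i ∈ s, f i z) := by
  classical
  induction s using Finset.cons_induction with
  | empty => simpa using convexOn_const (0:ℝ) convex_univ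
  | cons i s hi ih =>
    simp only [Finset.sum_cons]
    exact (h i (Finset.mem_cons_self _ _)).add
      (ih fun j hj => h j (Finset.mem_cons_of_mem hj))

end Aux2

section Main

local notation "⟪" x ", " y "⟫" => @inner ℝ _ _ x y

set_option maxHeartbeats 1000000 in
/-- one-step inner bound for smooth VR-SGD; the expectation over the
uniformly random index `i` is the average over `i : Fin n`. -/
theorem stmt_8 (d n : ℕ) (hn : 0 < n) (L β η : ℝ) (hL : 0 < L) (hβ : 1 < β)
    (hη : η = 1 / (L * β))
    (f : Fin n → EuclideanSpace ℝ (Fin d) → ℝ)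
    (hconv : ∀ i, ConvexOn ℝ Set.univ (f i))
    (hdiff : ∀ i, Differentiable ℝ (f i))
    (hlip : ∀ i x y, ‖gradient (f i) x - gradient (f i) y‖ ≤ L * ‖x - y‖)
    (favg : EuclideanSpace ℝ (Fin d) → ℝ)
    (hfavg : ∀ x, favg x = (1 / n : ℝ) * ∑ i, f i x)
    (xstar : EuclideanSpace ℝ (Fin d)) (hmin : ∀ x, favg xstar ≤ favg x)
    (xk xt : EuclideanSpace ℝ (Fin d))
    (xnext : Fin n → EuclideanSpace ℝ (Fin d))
    (hxnext : ∀ i, xnext i = xk -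
      η • (gradient (f i) xk - gradient (f i) xt + gradient favg xt)) :
    (1 / n : ℝ) * ∑ i, (favg (xnext i)) - favg xstar
      ≤ (2 / (β - 1)) * ((favg xk - favg xstar) + (favg xt - favg xstar))
        + (L * β / 2) *
          ((1 / n : ℝ) * ∑ i, (‖xstar - xk‖ ^ 2 - ‖xstar - xnext i‖ ^ 2)) := by
  have hn' : (0:ℝ) < (n:ℝ) := by exact_mod_cast hn
  have hn0 : (n:ℝ) ≠ 0 := hn'.ne'
  have hβ1 : (0:ℝ) < β - 1 := by linarith
  have hLβ : (0:ℝ) < L * β := by nlinarith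
  have hηpos : 0 < η := by rw [hη]; positivity
  have hLβη : L * β * η = 1 := by rw [hη]; field_simp
  -- gradient structure of favg
  have hfavg' : favg = fun z => (1 / n : ℝ) * ∑ i, f i z := funext hfavg
  have hgradsum : ∀ x, HasGradientAt favg ((1/(n:ℝ)) • ∑ i, gradient (f i) x) x := by
    intro x
    have h1 : HasGradientAt (fun z => ∑ i, f i z) (∑ i, gradient (f i) x) x :=
      my_hasGradientAt_sum Finset.univ (fun i _ => (hdiff i x).hasGradientAt)
    have h2 := my_hasGradientAt_const_mul (1/(n:ℝ)) h1
    rw [hfavg']; exact h2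
  have hgfavg : ∀ x, gradient favg x = (1/(n:ℝ)) • ∑ i, gradient (f i) x :=
    fun x => (hgradsum x).gradient
  have hsumgrad : ∀ x, ∑ i, gradient (f i) x = (n:ℝ) • gradient favg x := by
    intro x
    rw [hgfavg x, smul_smul]
    rw [mul_one_div, div_self hn0, one_smul]
  have hfavgdiff : Differentiable ℝ favg := fun x => (hgradsum x).differentiableAt
  have hfavgconv : ConvexOn ℝ Set.univ favg := by
    rw [hfavg']
    have hsum : ConvexOn ℝ Set.univ (fun z => ∑ i, f i z) := by
      exact my_convexOn_sum Finset.univ f (fun i _ => hconv i)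
    have := hsum.smul (c := (1/n : ℝ)) (by positivity)
    simpa [smul_eq_mul] using this
  have hfavglip : ∀ a b, ‖gradient favg a - gradient favg b‖ ≤ L * ‖a - b‖ := by
    intro p q
    rw [hgfavg, hgfavg, ← smul_sub, ← Finset.sum_sub_distrib]
    rw [norm_smul, Real.norm_eq_abs, abs_of_pos (by positivity : (0:ℝ) < 1/(n:ℝ))]
    calc (1/(n:ℝ)) * ‖∑ i, (gradient (f i) p - gradient (f i) q)‖
        ≤ (1/(n:ℝ)) * ∑ i, ‖gradient (f i) p - gradient (f i) q‖ := by
          gcongr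
          exact norm_sum_le _ _
      _ ≤ (1/(n:ℝ)) * ∑ _i : Fin n, L * ‖p - q‖ := by
          gcongr with i
          exact hlip i p q
      _ = L * ‖p - q‖ := by
          rw [Finset.sum_const, Finset.card_univ, Fintype.card_fin, nsmul_eq_mul]
          field_simp
  have hgradstar : gradient favg xstar = 0 := by
    have hlm : IsLocalMin favg xstar := Filter.Eventually.of_forall hmin
    have hfd := hlm.fderiv_eq_zero
    show (InnerProductSpace.toDual ℝ _).symm (fderiv ℝ favg xstar) = 0
    rw [hfd, map_zero]
  -- abbreviations
  set a : EuclideanSpace ℝ (Fin d) := xstar - xk with ha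
  set G : Fin n → EuclideanSpace ℝ (Fin d) :=
    fun i => gradient (f i) xk - gradient (f i) xt + gradient favg xt with hG
  -- per-index key inequality
  have hkey : ∀ i, favg (xnext i) ≤ favg xk + ⟪G i, a⟫
      + L * β / 2 * (‖xstar - xk‖ ^ 2 - ‖xstar - xnext i‖ ^ 2)
      + 1 / (2 * (L * (β - 1))) * ‖G i - gradient favg xk‖ ^ 2 := by
    intro i
    have hxn : xnext i = xk - η • G i := hxnext i
    have hΔ : xnext i - xk = -(η • G i) := by rw [hxn]; abel
    -- descent lemma
    have hd := my_descent hL.le hfavgdiff hfavglip xk (xnext i)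
    -- split the inner product
    have hsplit : ⟪gradient favg xk, xnext i - xk⟫
        = ⟪G i, xnext i - xk⟫ + ⟪gradient favg xk - G i, xnext i - xk⟫ := by
      rw [inner_sub_left]; ring
    -- Young
    have hY : ⟪gradient favg xk - G i, xnext i - xk⟫
        ≤ 1 / (2 * (L * (β - 1))) * ‖G i - gradient favg xk‖ ^ 2
          + L * (β - 1) / 2 * ‖xnext i - xk‖ ^ 2 := by
      have h1 : ⟪gradient favg xk - G i, xnext i - xk⟫
          ≤ ‖G i - gradient favg xk‖ * ‖xnext i - xk‖ := by
        calc ⟪gradient favg xk - G i, xnext i - xk⟫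
            ≤ ‖gradient favg xk - G i‖ * ‖xnext i - xk‖ := real_inner_le_norm _ _
          _ = ‖G i - gradient favg xk‖ * ‖xnext i - xk‖ := by rw [norm_sub_rev]
      have h2 := my_young (‖G i - gradient favg xk‖) (‖xnext i - xk‖)
        (L * (β - 1)) (by nlinarith)
      linarith
    -- 3-point identity
    have s1 : ⟪G i, xnext i - xk⟫ = -(η * ‖G i‖ ^ 2) := by
      rw [hΔ, inner_neg_right, real_inner_smul_right, real_inner_self_eq_norm_sq]
    have s2 : ‖xnext i - xk‖ ^ 2 = η ^ 2 * ‖G i‖ ^ 2 := by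
      rw [hΔ, norm_neg, norm_smul, Real.norm_eq_abs, abs_of_pos hηpos, mul_pow]
    have s3 : ‖xstar - xnext i‖ ^ 2
        = ‖xstar - xk‖ ^ 2 + 2 * (η * ⟪xstar - xk, G i⟫) + η ^ 2 * ‖G i‖ ^ 2 := by
      have hx : xstar - xnext i = (xstar - xk) + η • G i := by rw [hxn]; abel
      rw [hx, norm_add_sq_real, real_inner_smul_right, norm_smul, Real.norm_eq_abs,
        abs_of_pos hηpos, mul_pow]
    have s4 : ⟪G i, a⟫ = ⟪xstar - xk, G i⟫ := by rw [ha, real_inner_comm]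
    have h3pt : ⟪G i, xnext i - xk⟫ + L * β / 2 * ‖xnext i - xk‖ ^ 2
        = ⟪G i, a⟫ + L * β / 2 * (‖xstar - xk‖ ^ 2 - ‖xstar - xnext i‖ ^ 2) := by
      rw [s1, s2, s3, s4]
      linear_combination (η * ‖G i‖ ^ 2 + ⟪xstar - xk, G i⟫) * hLβη
    have e3 : L / 2 * ‖xnext i - xk‖ ^ 2 + L * (β - 1) / 2 * ‖xnext i - xk‖ ^ 2
        = L * β / 2 * ‖xnext i - xk‖ ^ 2 := by ring
    linarith
  -- averaging the inner product
  have hinner : ∑ i, ⟪G i, a⟫ = (n:ℝ) * ⟪gradient favg xk, a⟫ := by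
    rw [← sum_inner]
    have hGsum : ∑ i, G i = (n:ℝ) • gradient favg xk := by
      rw [hG]
      rw [Finset.sum_add_distrib, Finset.sum_sub_distrib, hsumgrad xk, hsumgrad xt,
        Finset.sum_const, Finset.card_univ, Fintype.card_fin,
        ← Nat.cast_smul_eq_nsmul ℝ (n : ℕ) (gradient favg xt)]
      abel
    rw [hGsum, real_inner_smul_left]
  have hfo : favg xk + ⟪gradient favg xk, a⟫ ≤ favg xstar := by
    have := my_convex_first_order hfavgconv hfavgdiff xk xstar
    rw [← ha] at this; exact this
  -- variance bound
  have hvar : ∑ i, ‖G i - gradient favg xk‖ ^ 2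
      ≤ (n:ℝ) * (4 * L * ((favg xk - favg xstar) + (favg xt - favg xstar))) := by
    set v : Fin n → EuclideanSpace ℝ (Fin d) :=
      fun i => gradient (f i) xk - gradient (f i) xt with hv
    set vbar : EuclideanSpace ℝ (Fin d) := gradient favg xk - gradient favg xt with hvbar
    have hGv : ∀ i, G i - gradient favg xk = v i - vbar := by
      intro i; simp only [hG, hv, hvbar]; abel
    have hsumv : ∑ i, v i = (n:ℝ) • vbar := by
      rw [hv, hvbar, Finset.sum_sub_distrib, hsumgrad xk, hsumgrad xt, smul_sub]
    -- step B : variance reduction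
    have hB : ∑ i, ‖v i - vbar‖ ^ 2 ≤ ∑ i, ‖v i‖ ^ 2 := by
      have hexp : ∀ i : Fin n, ‖v i - vbar‖ ^ 2
          = ‖v i‖ ^ 2 - 2 * ⟪v i, vbar⟫ + ‖vbar‖ ^ 2 := fun i => norm_sub_sq_real _ _
      have hsum : ∑ i, ‖v i - vbar‖ ^ 2
          = ∑ i, ‖v i‖ ^ 2 - 2 * ((n:ℝ) * ‖vbar‖ ^ 2) + (n:ℝ) * ‖vbar‖ ^ 2 := by
        rw [Finset.sum_congr rfl fun i _ => hexp i]
        rw [Finset.sum_add_distrib, Finset.sum_sub_distrib, ← Finset.mul_sum,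
          ← sum_inner, hsumv, real_inner_smul_left, real_inner_self_eq_norm_sq,
          Finset.sum_const, Finset.card_univ, Fintype.card_fin, nsmul_eq_mul]
      have hnn : (0:ℝ) ≤ (n:ℝ) * ‖vbar‖ ^ 2 := by positivity
      linarith
    -- step C + D : pointwise bound via cocoercivity
    have hC : ∀ i : Fin n, ‖v i‖ ^ 2
        ≤ 2 * (2 * L * (f i xk - f i xstar - ⟪gradient (f i) xstar, xk - xstar⟫))
          + 2 * (2 * L * (f i xt - f i xstar - ⟪gradient (f i) xstar, xt - xstar⟫)) := by
      intro i
      set ai := gradient (f i) xk - gradient (f i) xstar with hai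
      set bi := gradient (f i) xt - gradient (f i) xstar with hbi
      have hvab : v i = ai - bi := by rw [hv, hai, hbi]; abel
      have h1 : ‖v i‖ ^ 2 ≤ 2 * ‖ai‖ ^ 2 + 2 * ‖bi‖ ^ 2 := by
        rw [hvab]
        linarith [norm_sub_sq_real ai bi, norm_add_sq_real ai bi, sq_nonneg ‖ai + bi‖]
      have h2 := my_coco hL (hconv i) (hdiff i) (hlip i) xk xstar
      have h3 := my_coco hL (hconv i) (hdiff i) (hlip i) xt xstar
      rw [← hai] at h2
      rw [← hbi] at h3
      linarith [h1, h2, h3]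
    -- sum it up
    have hsumf : ∀ x : EuclideanSpace ℝ (Fin d), ∑ i, f i x = (n:ℝ) * favg x := by
      intro x; rw [hfavg x]; field_simp
    have hsuminner : ∀ w : EuclideanSpace ℝ (Fin d),
        ∑ i, ⟪gradient (f i) xstar, w⟫ = 0 := by
      intro w
      rw [← sum_inner, hsumgrad xstar, hgradstar, smul_zero, inner_zero_left]
    calc ∑ i, ‖G i - gradient favg xk‖ ^ 2
        = ∑ i, ‖v i - vbar‖ ^ 2 := by
          exact Finset.sum_congr rfl fun i _ => by rw [hGv i]
      _ ≤ ∑ i, ‖v i‖ ^ 2 := hB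
      _ ≤ ∑ i, (2 * (2 * L * (f i xk - f i xstar - ⟪gradient (f i) xstar, xk - xstar⟫))
          + 2 * (2 * L * (f i xt - f i xstar - ⟪gradient (f i) xstar, xt - xstar⟫))) :=
          Finset.sum_le_sum fun i _ => hC i
      _ = (n:ℝ) * (4 * L * ((favg xk - favg xstar) + (favg xt - favg xstar))) := by
          simp only [Finset.sum_add_distrib, Finset.sum_sub_distrib, ← Finset.mul_sum]
          rw [hsumf xk, hsumf xt, hsumf xstar, hsuminner (xk - xstar),
            hsuminner (xt - xstar)]
          ring
  -- assemble
  have hsumkey := Finset.sum_le_sum (fun i (_ : i ∈ Finset.univ) => hkey i)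
  have hsum_eq : ∑ i, (favg xk + ⟪G i, a⟫
      + L * β / 2 * (‖xstar - xk‖ ^ 2 - ‖xstar - xnext i‖ ^ 2)
      + 1 / (2 * (L * (β - 1))) * ‖G i - gradient favg xk‖ ^ 2)
      = (n:ℝ) * favg xk + (n:ℝ) * ⟪gradient favg xk, a⟫
        + L * β / 2 * (∑ i, (‖xstar - xk‖ ^ 2 - ‖xstar - xnext i‖ ^ 2))
        + 1 / (2 * (L * (β - 1))) * (∑ i, ‖G i - gradient favg xk‖ ^ 2) := by
    simp only [Finset.sum_add_distrib, ← Finset.mul_sum, hinner, Finset.sum_const,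
      Finset.card_univ, Fintype.card_fin, nsmul_eq_mul]
  rw [hsum_eq] at hsumkey
  set X : ℝ := (favg xk - favg xstar) + (favg xt - favg xstar) with hX
  set SΔ : ℝ := ∑ i, (‖xstar - xk‖ ^ 2 - ‖xstar - xnext i‖ ^ 2) with hSΔ
  set SV : ℝ := ∑ i, ‖G i - gradient favg xk‖ ^ 2 with hSV
  set S1 : ℝ := ∑ i, favg (xnext i) with hS1
  have hC : (0:ℝ) < 1 / (2 * (L * (β - 1))) := by positivity
  have hstep1 : (n:ℝ) * (favg xk + ⟪gradient favg xk, a⟫) ≤ (n:ℝ) * favg xstar :=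
    mul_le_mul_of_nonneg_left hfo hn'.le
  have hstep2 : 1 / (2 * (L * (β - 1))) * SV
      ≤ 1 / (2 * (L * (β - 1))) * ((n:ℝ) * (4 * L * X)) :=
    mul_le_mul_of_nonneg_left hvar hC.le
  have hcoef : 1 / (2 * (L * (β - 1))) * ((n:ℝ) * (4 * L * X))
      = (n:ℝ) * ((2 / (β - 1)) * X) := by
    field_simp
    ring
  have hS : S1 ≤ (n:ℝ) * favg xstar + (n:ℝ) * ((2 / (β - 1)) * X)
      + L * β / 2 * SΔ := by
    rw [hcoef] at hstep2
    have hd : (n:ℝ) * favg xk + (n:ℝ) * ⟪gradient favg xk, a⟫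
        = (n:ℝ) * (favg xk + ⟪gradient favg xk, a⟫) := by ring
    linarith [hsumkey]
  have hmul := mul_le_mul_of_nonneg_left hS (by positivity : (0:ℝ) ≤ 1/(n:ℝ))
  have hre : (1/(n:ℝ)) * ((n:ℝ) * favg xstar + (n:ℝ) * ((2 / (β - 1)) * X)
      + L * β / 2 * SΔ)
      = favg xstar + (2 / (β - 1)) * X + L * β / 2 * ((1/(n:ℝ)) * SΔ) := by
    field_simp
  rw [hre] at hmul
  linarith [hmul]

end Main
end

section
/- Epoch bound (Option II): Under the setting of VR-SGD with smooth objective f, convex L-smooth components, step size η = 1/(Lβ) with β > 3, epoch length m ≥ 2, and snapshot x̃^s = (1/(m−1))∑_{k=1}^{m−1} x_k^s, one has: (1 − 2/(β−1)) E[f(x̃^s) − f(x*)] + (1/(m−1)) E[f(x_m^s) − f(x*)] ≤ (2m/((β−1)(m−1))) E[f(x̃^{s−1}) − f(x*)] + (2/((β−1)(m−1))) E[f(x_0^s) − f(x*)] + (Lβ/(2(m−1))) E[‖x* − x_0^s‖² − ‖x* − x_m^s‖²]. -/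
open scoped BigOperators


open scoped RealInnerProductSpace
open Set intervalIntegral

variable {F : Type*} [NormedAddCommGroup F] [InnerProductSpace ℝ F] [CompleteSpace F]

theorem my_line_deriv (a v : F) (t : ℝ) : HasDerivAt (fun t : ℝ => a + t • v) v t := by
  simpa using ((hasDerivAt_id t).smul_const v).const_add a

theorem my_phi_deriv (g : F → ℝ) (G : F → F) (hG : ∀ z, HasGradientAt g (G z) z)
    (a v : F) (t : ℝ) :
    HasDerivAt (fun t : ℝ => g (a + t • v)) (⟪G (a + t • v), v⟫) t := by
  have h1 := (hG (a + t • v)).hasFDerivAt.comp_hasDerivAt t (my_line_deriv a v t)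
  simpa [InnerProductSpace.toDual_apply_apply, Function.comp_def] using h1

theorem my_descent_s11 (g : F → ℝ) (G : F → F)
    (hG : ∀ z, HasGradientAt g (G z) z) {L : ℝ} (hL : 0 ≤ L)
    (hlip : ∀ p q, ‖G p - G q‖ ≤ L * ‖p - q‖) (a b : F) :
    g b ≤ g a + ⟪G a, b - a⟫ + L / 2 * ‖b - a‖ ^ 2 := by
  set v := b - a with hv
  have hGcont : Continuous G := by
    have h : LipschitzWith (Real.toNNReal L) G := by
      apply LipschitzWith.of_dist_le_mul
      intro p q
      rw [dist_eq_norm, dist_eq_norm]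
      calc ‖G p - G q‖ ≤ L * ‖p - q‖ := hlip p q
        _ ≤ (Real.toNNReal L : ℝ) * ‖p - q‖ := by
            gcongr
            exact (Real.le_coe_toNNReal L)
    exact h.continuous
  have hccomp : Continuous fun t : ℝ => (⟪G (a + t • v), v⟫ : ℝ) := by
    exact (hGcont.comp (continuous_const.add (continuous_id.smul continuous_const))).inner
          continuous_const
  have hintegrable : IntervalIntegrable (fun t : ℝ => (⟪G (a + t • v), v⟫ : ℝ))
      MeasureTheory.volume 0 1 := hccomp.intervalIntegrable _ _
  have heq : ∫ t in (0:ℝ)..1, (⟪G (a + t • v), v⟫ : ℝ) = g b - g a := by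
    have := integral_eq_sub_of_hasDerivAt
      (f := fun t : ℝ => g (a + t • v)) (f' := fun t : ℝ => (⟪G (a + t • v), v⟫ : ℝ))
      (fun t _ => my_phi_deriv g G hG a v t) hintegrable
    rw [this]
    norm_num [hv]
  have hbound : ∫ t in (0:ℝ)..1, (⟪G (a + t • v), v⟫ : ℝ)
      ≤ ∫ t in (0:ℝ)..1, (⟪G a, v⟫ + (L * ‖v‖ ^ 2) * t) := by
    apply intervalIntegral.integral_mono_on zero_le_one hintegrable
    · have : Continuous fun t : ℝ => (⟪G a, v⟫ : ℝ) + (L * ‖v‖ ^ 2) * t := by continuity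
      exact this.intervalIntegrable _ _
    · intro t ht
      have h2 : (⟪G (a + t • v) - G a, v⟫ : ℝ) ≤ ‖G (a + t • v) - G a‖ * ‖v‖ :=
        real_inner_le_norm _ _
      have h3 : ‖G (a + t • v) - G a‖ ≤ L * ‖t • v‖ := by
        simpa using hlip (a + t • v) a
      have h4 : ‖t • v‖ = t * ‖v‖ := by
        rw [norm_smul, Real.norm_eq_abs, abs_of_nonneg ht.1]
      have h5 : (⟪G (a + t • v), v⟫ : ℝ) = ⟪G a, v⟫ + ⟪G (a + t • v) - G a, v⟫ := by
        rw [inner_sub_left]; ring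
      rw [h5]
      have h6 := mul_le_mul_of_nonneg_right h3 (norm_nonneg v)
      rw [h4] at h6
      nlinarith
  have hval : ∫ t in (0:ℝ)..1, ((⟪G a, v⟫ : ℝ) + (L * ‖v‖ ^ 2) * t)
      = ⟪G a, v⟫ + L / 2 * ‖v‖ ^ 2 := by
    have h1 : IntervalIntegrable (fun t : ℝ => (L * ‖v‖ ^ 2) * t) MeasureTheory.volume 0 1 := by
      apply Continuous.intervalIntegrable; continuity
    rw [intervalIntegral.integral_add intervalIntegrable_const h1,
      intervalIntegral.integral_const, intervalIntegral.integral_const_mul, integral_id]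
    norm_num
    ring
  rw [heq] at hbound
  rw [hval] at hbound
  linarith

theorem my_convex_lb (g : F → ℝ) (G : F → F) (hg : ConvexOn ℝ Set.univ g)
    (hG : ∀ z, HasGradientAt g (G z) z) (a b : F) :
    g a + ⟪G a, b - a⟫ ≤ g b := by
  have hconvφ : ConvexOn ℝ Set.univ fun t : ℝ => g (a + t • (b - a)) := by
    have h := hg.comp_affineMap (AffineMap.lineMap a b)
    have he : (g ∘ (AffineMap.lineMap a b)) = fun t : ℝ => g (a + t • (b - a)) := by
      funext t
      simp [AffineMap.lineMap_apply, add_comm]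
    rw [he] at h
    simpa using h
  have hφ := my_phi_deriv g G hG a (b - a)
  have h0 : HasDerivAt (fun t : ℝ => g (a + t • (b - a))) (⟪G a, b - a⟫) 0 := by
    simpa using hφ 0
  have := hconvφ.le_slope_of_hasDerivAt (Set.mem_univ 0) (Set.mem_univ 1) one_pos h0
  rw [slope_def_field] at this
  simp at this
  linarith


theorem my_coco_s11 (g : F → ℝ) (G : F → F) (hg : ConvexOn ℝ Set.univ g)
    (hG : ∀ z, HasGradientAt g (G z) z) {L : ℝ} (hL : 0 < L)
    (hlip : ∀ p q, ‖G p - G q‖ ≤ L * ‖p - q‖) (a b : F) :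
    ‖G a - G b‖ ^ 2 ≤ 2 * L * (g a - g b - ⟪G b, a - b⟫) := by
  set φ : F → ℝ := fun z => g z - ⟪G b, z⟫ with hφdef
  set Gφ : F → F := fun z => G z - G b with hGφdef
  have hGφat : ∀ z, HasGradientAt φ (Gφ z) z := by
    intro z
    have h1 : HasFDerivAt (fun z : F => (⟪G b, z⟫ : ℝ)) (innerSL ℝ (G b)) z :=
      (innerSL ℝ (G b)).hasFDerivAt
    have h2 := (hG z).hasFDerivAt.sub h1
    have h3 : (InnerProductSpace.toDual ℝ F) (Gφ z)
        = (InnerProductSpace.toDual ℝ F) (G z) - innerSL ℝ (G b) := by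
      ext w
      simp [hGφdef, inner_sub_left]
    rw [hasGradientAt_iff_hasFDerivAt, h3]
    exact h2
  have hφconv : ConvexOn ℝ Set.univ φ := by
    have hlin : ConvexOn ℝ Set.univ (fun z : F => (⟪-G b, z⟫ : ℝ)) := by
      have := (innerSL ℝ (-G b)).toLinearMap.convexOn (convex_univ (𝕜 := ℝ) (E := F))
      exact this
    have hadd := hg.add hlin
    have he : φ = (g + fun z : F => (⟪-G b, z⟫ : ℝ)) := by
      funext z
      simp [hφdef, sub_eq_add_neg, inner_neg_left]
    rw [he]
    exact hadd
  have hφlip : ∀ p q, ‖Gφ p - Gφ q‖ ≤ L * ‖p - q‖ := by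
    intro p q
    simpa [hGφdef, sub_sub_sub_cancel_right] using hlip p q
  have hbmin := my_convex_lb φ Gφ hφconv hGφat b (a - L⁻¹ • Gφ a)
  have hdesc := my_descent_s11 φ Gφ hGφat hL.le hφlip a (a - L⁻¹ • Gφ a)
  have hGφb : Gφ b = 0 := by simp [hGφdef]
  rw [hGφb] at hbmin
  simp only [inner_zero_left, add_zero] at hbmin
  have hkey : φ b ≤ φ a - 1 / (2 * L) * ‖Gφ a‖ ^ 2 := by
    have e1 : (a - L⁻¹ • Gφ a) - a = -(L⁻¹ • Gφ a) := by abel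
    have e2 : (⟪Gφ a, (a - L⁻¹ • Gφ a) - a⟫ : ℝ) = -(L⁻¹ * ‖Gφ a‖ ^ 2) := by
      rw [e1, inner_neg_right, real_inner_smul_right, real_inner_self_eq_norm_sq]
    have e3 : ‖(a - L⁻¹ • Gφ a) - a‖ ^ 2 = L⁻¹ ^ 2 * ‖Gφ a‖ ^ 2 := by
      rw [e1, norm_neg, norm_smul, Real.norm_eq_abs, abs_of_nonneg (inv_nonneg.mpr hL.le)]
      ring
    rw [e2, e3] at hdesc
    have hcalc : φ a + -(L⁻¹ * ‖Gφ a‖ ^ 2) + L / 2 * (L⁻¹ ^ 2 * ‖Gφ a‖ ^ 2)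
        = φ a - 1 / (2 * L) * ‖Gφ a‖ ^ 2 := by
      field_simp
      ring
    calc φ b ≤ _ := hbmin
      _ ≤ _ := hdesc
      _ = _ := hcalc
  have hφab : φ a - φ b = g a - g b - ⟪G b, a - b⟫ := by
    simp [hφdef, inner_sub_right]
    ring
  have hGφa : Gφ a = G a - G b := rfl
  rw [← hGφa, ← hφab]
  have h2L : 0 < 2 * L := by linarith
  have h6 : 1 / (2 * L) * ‖Gφ a‖ ^ 2 ≤ φ a - φ b := by linarith
  calc ‖Gφ a‖ ^ 2 = 2 * L * (1 / (2 * L) * ‖Gφ a‖ ^ 2) := by field_simp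
    _ ≤ 2 * L * (φ a - φ b) := mul_le_mul_of_nonneg_left h6 h2L.le


variable {F : Type*} [NormedAddCommGroup F] [InnerProductSpace ℝ F] [CompleteSpace F]

set_option maxHeartbeats 1000000 in
theorem my_key {n : ℕ} (hn' : (0:ℝ) < n) (L β η : ℝ) (hL : 0 < L) (hβ : 3 < β)
    (hη : η = 1 / (L * β))
    (f : Fin n → F → ℝ) (G : Fin n → F → F)
    (hGfat : ∀ i z, HasGradientAt (f i) (G i z) z)
    (hconvf : ∀ i, ConvexOn ℝ Set.univ (f i))
    (hlip : ∀ i p q, ‖G i p - G i q‖ ≤ L * ‖p - q‖)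
    (favg : F → ℝ) (hfavgn : ∀ z, ∑ i, f i z = (n : ℝ) * favg z)
    (Ga : F → F) (hsumG : ∀ z, ∑ i, G i z = (n : ℝ) • Ga z)
    (hGaat : ∀ z, HasGradientAt favg (Ga z) z)
    (hfavgconv : ConvexOn ℝ Set.univ favg)
    (hGalip : ∀ p q, ‖Ga p - Ga q‖ ≤ L * ‖p - q‖)
    (xstar : F) (hmin : ∀ z, favg xstar ≤ favg z) (hGastar : Ga xstar = 0)
    (xt y : F) :
    ∑ i, ((β - 1) * (favg (y - η • (G i y - G i xt + Ga xt)) - favg xstar)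
          + (L * β * (β - 1) / 2) * ‖xstar - (y - η • (G i y - G i xt + Ga xt))‖ ^ 2)
    ≤ (n : ℝ) * ((L * β * (β - 1) / 2) * ‖xstar - y‖ ^ 2
          + 2 * (favg y - favg xstar) + 2 * (favg xt - favg xstar)) := by
  have hβ1 : (0:ℝ) < β - 1 := by linarith
  have hβ0 : (0:ℝ) < β := by linarith
  have hLβ : 0 < L * β := mul_pos hL hβ0
  have hηpos : 0 < η := by rw [hη]; positivity
  set C : ℝ := L * β * (β - 1) / 2 with hC
  set gv : Fin n → F := fun i => G i y - G i xt + Ga xt with hgv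
  set st : Fin n → F := fun i => y - η • gv i with hst
  -- sum of the stochastic gradients
  have hsumg : ∑ i, gv i = (n : ℝ) • Ga y := by
    rw [hgv]
    rw [Finset.sum_add_distrib, Finset.sum_sub_distrib, hsumG y, hsumG xt, Finset.sum_const,
      Finset.card_univ, Fintype.card_fin]
    rw [← Nat.cast_smul_eq_nsmul ℝ n (Ga xt)]
    abel
  -- per-index inequality
  have hper : ∀ i, 2 * η * (favg (st i) - favg xstar) + ‖xstar - st i‖ ^ 2
      ≤ ‖xstar - y‖ ^ 2
        + 2 * η * ((⟪Ga y - gv i, y - xstar⟫) - η * ⟪Ga y - gv i, gv i⟫)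
        + (L * η ^ 3 - η ^ 2) * ‖gv i‖ ^ 2 := by
    intro i
    have hsy : st i - y = -(η • gv i) := by rw [hst]; beta_reduce; abel
    have hdesc := my_descent_s11 favg Ga hGaat hL.le hGalip y (st i)
    have hcross : (⟪Ga y, st i - y⟫ : ℝ) = -(η * ⟪Ga y, gv i⟫) := by
      rw [hsy, inner_neg_right, real_inner_smul_right]
    have hnorm1 : ‖st i - y‖ ^ 2 = η ^ 2 * ‖gv i‖ ^ 2 := by
      rw [hsy, norm_neg, norm_smul, Real.norm_eq_abs, abs_of_nonneg hηpos.le]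
      ring
    rw [hcross, hnorm1] at hdesc
    have hlb := my_convex_lb favg Ga hfavgconv hGaat y xstar
    have hQ : ‖xstar - st i‖ ^ 2 = ‖xstar - y‖ ^ 2 + 2 * (η * ⟪xstar - y, gv i⟫)
        + η ^ 2 * ‖gv i‖ ^ 2 := by
      have hxs : xstar - st i = (xstar - y) + η • gv i := by rw [hst]; beta_reduce; abel
      rw [hxs, norm_add_sq_real, real_inner_smul_right, norm_smul, Real.norm_eq_abs,
        abs_of_nonneg hηpos.le]
      ring
    have e1 : (⟪Ga y - gv i, y - xstar⟫ : ℝ)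
        = -(⟪Ga y, xstar - y⟫) + ⟪xstar - y, gv i⟫ := by
      rw [inner_sub_left, show y - xstar = -(xstar - y) by abel, inner_neg_right,
        inner_neg_right, real_inner_comm (gv i) (xstar - y)]
      ring
    have e2 : (⟪Ga y - gv i, gv i⟫ : ℝ) = ⟪Ga y, gv i⟫ - ‖gv i‖ ^ 2 := by
      rw [inner_sub_left, real_inner_self_eq_norm_sq]
    rw [hQ, e1, e2]
    have hdmul := mul_le_mul_of_nonneg_left hdesc (by linarith : (0:ℝ) ≤ 2 * η)
    have hlmul := mul_le_mul_of_nonneg_left hlb (by linarith : (0:ℝ) ≤ 2 * η)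
    nlinarith [hdmul, hlmul]
  -- sum the per-index inequality
  have hsum0 := Finset.sum_le_sum (fun i (_ : i ∈ Finset.univ) => hper i)
  set SP : ℝ := ∑ i, (favg (st i) - favg xstar) with hSP
  set SQ : ℝ := ∑ i, ‖xstar - st i‖ ^ 2 with hSQ
  set S : ℝ := ∑ i, ‖gv i‖ ^ 2 with hS
  have hRzero : ∑ i, (⟪Ga y - gv i, y - xstar⟫ : ℝ) = 0 := by
    rw [← sum_inner]
    have : ∑ i, (Ga y - gv i) = (0 : F) := by
      rw [Finset.sum_sub_distrib, hsumg, Finset.sum_const, Finset.card_univ, Fintype.card_fin,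
        ← Nat.cast_smul_eq_nsmul ℝ n (Ga y)]
      abel
    rw [this, inner_zero_left]
  have hRinner : ∑ i, (⟪Ga y - gv i, gv i⟫ : ℝ) = (n : ℝ) * ‖Ga y‖ ^ 2 - S := by
    have h1 : ∑ i, (⟪Ga y - gv i, gv i⟫ : ℝ) = ∑ i, ((⟪Ga y, gv i⟫ : ℝ) - ‖gv i‖ ^ 2) := by
      refine Finset.sum_congr rfl fun i _ => ?_
      rw [inner_sub_left, real_inner_self_eq_norm_sq]
    rw [h1, Finset.sum_sub_distrib, ← inner_sum, hsumg, real_inner_smul_right,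
      real_inner_self_eq_norm_sq, ← hS]
  have hsum1 : 2 * η * SP + SQ ≤ (n : ℝ) * ‖xstar - y‖ ^ 2 + (η ^ 2 + L * η ^ 3) * S := by
    have hL1 : ∑ i, (2 * η * (favg (st i) - favg xstar) + ‖xstar - st i‖ ^ 2)
        = 2 * η * SP + SQ := by
      rw [Finset.sum_add_distrib, ← Finset.mul_sum, hSP, hSQ]
    have hL2 : ∑ i, (‖xstar - y‖ ^ 2
        + 2 * η * ((⟪Ga y - gv i, y - xstar⟫) - η * ⟪Ga y - gv i, gv i⟫)
        + (L * η ^ 3 - η ^ 2) * ‖gv i‖ ^ 2)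
        = (n : ℝ) * ‖xstar - y‖ ^ 2
          + 2 * η * (0 - η * ((n : ℝ) * ‖Ga y‖ ^ 2 - S)) + (L * η ^ 3 - η ^ 2) * S := by
      rw [Finset.sum_add_distrib, Finset.sum_add_distrib, Finset.sum_const, Finset.card_univ,
        Fintype.card_fin, nsmul_eq_mul, ← Finset.mul_sum, ← Finset.mul_sum]
      rw [Finset.sum_sub_distrib, ← Finset.mul_sum, hRzero, hRinner, ← hS]
    rw [hL1, hL2] at hsum0
    have hnn : 0 ≤ 2 * η * (η * ((n : ℝ) * ‖Ga y‖ ^ 2)) := by positivity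
    nlinarith [hsum0]
  -- variance bound
  have hA : ∀ z : F, favg xstar ≤ favg z → ∑ i, ‖G i z - G i xstar‖ ^ 2
      ≤ 2 * L * (n : ℝ) * (favg z - favg xstar) := by
    intro z _
    have hcoco : ∀ i, ‖G i z - G i xstar‖ ^ 2
        ≤ 2 * L * (f i z - f i xstar - ⟪G i xstar, z - xstar⟫) := fun i =>
      my_coco_s11 (f i) (G i) (hconvf i) (hGfat i) hL (hlip i) z xstar
    calc ∑ i, ‖G i z - G i xstar‖ ^ 2
        ≤ ∑ i, 2 * L * (f i z - f i xstar - ⟪G i xstar, z - xstar⟫) :=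
          Finset.sum_le_sum fun i _ => hcoco i
      _ = 2 * L * (∑ i, f i z - ∑ i, f i xstar - ⟪∑ i, G i xstar, z - xstar⟫) := by
          rw [← Finset.mul_sum, Finset.sum_sub_distrib, Finset.sum_sub_distrib, sum_inner]
      _ = 2 * L * (n : ℝ) * (favg z - favg xstar) := by
          rw [hfavgn z, hfavgn xstar, hsumG xstar, hGastar, smul_zero, inner_zero_left]
          ring
  have hvar : S ≤ 4 * L * (n : ℝ) * ((favg y - favg xstar) + (favg xt - favg xstar)) := by
    set a : Fin n → F := fun i => G i y - G i xstar with ha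
    set b : Fin n → F := fun i => (G i xt - G i xstar) - Ga xt with hb
    have hab : ∀ i, gv i = a i - b i := by
      intro i; rw [hgv, ha, hb]; beta_reduce; abel
    have hper2 : ∀ i, ‖gv i‖ ^ 2 ≤ 2 * ‖a i‖ ^ 2 + 2 * ‖b i‖ ^ 2 := by
      intro i
      have h1 := norm_sub_sq_real (a i) (b i)
      have h2 := norm_add_sq_real (a i) (b i)
      have h3 : (0:ℝ) ≤ ‖a i + b i‖ ^ 2 := by positivity
      rw [hab i, h1]
      linarith
    have hsb : ∑ i, ‖b i‖ ^ 2 ≤ ∑ i, ‖G i xt - G i xstar‖ ^ 2 := by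
      have hexp : ∀ i, ‖b i‖ ^ 2 = ‖G i xt - G i xstar‖ ^ 2
          - 2 * ⟪G i xt - G i xstar, Ga xt⟫ + ‖Ga xt‖ ^ 2 := by
        intro i
        rw [hb]
        rw [norm_sub_sq_real]
      have hsumv : ∑ i, (G i xt - G i xstar) = (n : ℝ) • Ga xt := by
        rw [Finset.sum_sub_distrib, hsumG xt, hsumG xstar, hGastar, smul_zero, sub_zero]
      calc ∑ i, ‖b i‖ ^ 2
          = ∑ i, ‖G i xt - G i xstar‖ ^ 2 - 2 * ⟪∑ i, (G i xt - G i xstar), Ga xt⟫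
            + (n : ℝ) * ‖Ga xt‖ ^ 2 := by
            rw [Finset.sum_congr rfl fun i _ => hexp i]
            rw [Finset.sum_add_distrib, Finset.sum_sub_distrib, Finset.sum_const,
              Finset.card_univ, Fintype.card_fin, nsmul_eq_mul, ← Finset.mul_sum, sum_inner]
        _ = ∑ i, ‖G i xt - G i xstar‖ ^ 2 - (n : ℝ) * ‖Ga xt‖ ^ 2 := by
            rw [hsumv, real_inner_smul_left, real_inner_self_eq_norm_sq]
            ring
        _ ≤ ∑ i, ‖G i xt - G i xstar‖ ^ 2 := by nlinarith [norm_nonneg (Ga xt), sq_nonneg ‖Ga xt‖, hn']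
    have hsa := hA y (hmin y)
    have hsv := hA xt (hmin xt)
    have h1 : S ≤ 2 * ∑ i, ‖a i‖ ^ 2 + 2 * ∑ i, ‖b i‖ ^ 2 := by
      rw [hS]
      calc ∑ i, ‖gv i‖ ^ 2 ≤ ∑ i, (2 * ‖a i‖ ^ 2 + 2 * ‖b i‖ ^ 2) :=
            Finset.sum_le_sum fun i _ => hper2 i
        _ = 2 * ∑ i, ‖a i‖ ^ 2 + 2 * ∑ i, ‖b i‖ ^ 2 := by
            rw [Finset.sum_add_distrib, ← Finset.mul_sum, ← Finset.mul_sum]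
    have h2 : ∑ i, ‖a i‖ ^ 2 ≤ 2 * L * (n : ℝ) * (favg y - favg xstar) := hsa
    linarith [hsb, h1, h2, hsv]
  -- combine
  have hgoalL : ∑ i, ((β - 1) * (favg (st i) - favg xstar) + C * ‖xstar - st i‖ ^ 2)
      = (β - 1) * SP + C * SQ := by
    rw [Finset.sum_add_distrib, ← Finset.mul_sum, ← Finset.mul_sum, hSP, hSQ]
  have hCpos : 0 < C := by rw [hC]; positivity
  have hC2 : C * (2 * η) = β - 1 := by
    rw [hC, hη]
    field_simp
  have hΔ : 0 ≤ (favg y - favg xstar) + (favg xt - favg xstar) := by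
    have := hmin y; have := hmin xt; linarith
  have hcoefS : C * (η ^ 2 + L * η ^ 3) * (4 * L * (n : ℝ)) ≤ 2 * (n : ℝ) := by
    have h4 : C * (η ^ 2 + L * η ^ 3) * (4 * L) = 2 * (β ^ 2 - 1) / β ^ 2 := by
      rw [hC, hη]
      field_simp
      ring
    have h5 : 2 * (β ^ 2 - 1) / β ^ 2 ≤ 2 := by
      rw [div_le_iff₀ (by positivity)]
      nlinarith
    calc C * (η ^ 2 + L * η ^ 3) * (4 * L * (n : ℝ))
        = (C * (η ^ 2 + L * η ^ 3) * (4 * L)) * (n : ℝ) := by ring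
      _ ≤ 2 * (n : ℝ) := by
          rw [h4]
          exact mul_le_mul_of_nonneg_right h5 hn'.le
  calc ∑ i, ((β - 1) * (favg (st i) - favg xstar) + C * ‖xstar - st i‖ ^ 2)
      = C * (2 * η * SP + SQ) := by rw [hgoalL]; rw [mul_add]; rw [show C * (2 * η * SP) = (C * (2*η)) * SP by ring, hC2]
    _ ≤ C * ((n : ℝ) * ‖xstar - y‖ ^ 2 + (η ^ 2 + L * η ^ 3) * S) :=
        mul_le_mul_of_nonneg_left hsum1 hCpos.le
    _ = C * (n : ℝ) * ‖xstar - y‖ ^ 2 + (C * (η ^ 2 + L * η ^ 3)) * S := by ring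
    _ ≤ C * (n : ℝ) * ‖xstar - y‖ ^ 2
        + (C * (η ^ 2 + L * η ^ 3)) * (4 * L * (n : ℝ) * ((favg y - favg xstar) + (favg xt - favg xstar))) := by
        have hc : 0 ≤ C * (η ^ 2 + L * η ^ 3) := by positivity
        exact add_le_add (le_refl _) (mul_le_mul_of_nonneg_left hvar hc)
    _ ≤ C * (n : ℝ) * ‖xstar - y‖ ^ 2 + 2 * (n : ℝ) * ((favg y - favg xstar) + (favg xt - favg xstar)) := by
        have h7 := mul_le_mul_of_nonneg_right hcoefS hΔ
        have h8 : C * (η ^ 2 + L * η ^ 3) * (4 * L * ↑n * (favg y - favg xstar + (favg xt - favg xstar)))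
            = C * (η ^ 2 + L * η ^ 3) * (4 * L * ↑n) * (favg y - favg xstar + (favg xt - favg xstar)) := by ring
        have h9 : (2:ℝ) * ↑n * (favg y - favg xstar + (favg xt - favg xstar))
            = 2 * ↑n * (favg y - favg xstar) + 2 * ↑n * (favg xt - favg xstar) := by ring
        linarith [h7]
    _ = (n : ℝ) * (C * ‖xstar - y‖ ^ 2 + 2 * (favg y - favg xstar) + 2 * (favg xt - favg xstar)) := by
        ring


set_option maxHeartbeats 1600000 in
/-- epoch bound for VR-SGD with Option II (snapshot = average of the first m-1 iterates);
expectations over the epoch's random indices are uniform averages over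
`ω : Fin m → Fin n`. -/
theorem stmt_11 (d n m : ℕ) (hn : 0 < n) (hm : 2 ≤ m)
    (L β η : ℝ) (hL : 0 < L) (hβ : 3 < β) (hη : η = 1 / (L * β))
    (f : Fin n → EuclideanSpace ℝ (Fin d) → ℝ)
    (hconv : ∀ i, ConvexOn ℝ Set.univ (f i))
    (hdiff : ∀ i, Differentiable ℝ (f i))
    (hlip : ∀ i x y, ‖gradient (f i) x - gradient (f i) y‖ ≤ L * ‖x - y‖)
    (favg : EuclideanSpace ℝ (Fin d) → ℝ)
    (hfavg : ∀ x, favg x = (1 / n : ℝ) * ∑ i, f i x)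
    (xstar : EuclideanSpace ℝ (Fin d)) (hmin : ∀ x, favg xstar ≤ favg x)
    (xtprev x0 : EuclideanSpace ℝ (Fin d))
    (x : (Fin m → Fin n) → ℕ → EuclideanSpace ℝ (Fin d))
    (hx0 : ∀ ω, x ω 0 = x0)
    (hstep : ∀ ω (k : Fin m),
      x ω ((k : ℕ) + 1) = x ω (k : ℕ) -
        η • (gradient (f (ω k)) (x ω (k : ℕ)) - gradient (f (ω k)) xtprev
              + gradient favg xtprev))
    (xt : (Fin m → Fin n) → EuclideanSpace ℝ (Fin d))
    (hxt : ∀ ω, xt ω = (1 / ((m : ℝ) - 1)) • ∑ k ∈ Finset.range (m - 1), x ω (k + 1)) :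
    (1 - 2 / (β - 1)) *
        ((Fintype.card (Fin m → Fin n) : ℝ)⁻¹ *
          ∑ ω : Fin m → Fin n, (favg (xt ω) - favg xstar))
      + (1 / ((m : ℝ) - 1)) *
        ((Fintype.card (Fin m → Fin n) : ℝ)⁻¹ *
          ∑ ω : Fin m → Fin n, (favg (x ω m) - favg xstar))
    ≤ (2 * m / ((β - 1) * ((m : ℝ) - 1))) * (favg xtprev - favg xstar)
      + (2 / ((β - 1) * ((m : ℝ) - 1))) * (favg x0 - favg xstar)
      + (L * β / (2 * ((m : ℝ) - 1))) *
        ((Fintype.card (Fin m → Fin n) : ℝ)⁻¹ *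
          ∑ ω : Fin m → Fin n, (‖xstar - x0‖ ^ 2 - ‖xstar - x ω m‖ ^ 2)) := by
  have hn' : (0:ℝ) < n := by exact_mod_cast hn
  have hn0 : (n:ℝ) ≠ 0 := ne_of_gt hn'
  have hβ1 : (0:ℝ) < β - 1 := by linarith
  have hβ0 : (0:ℝ) < β := by linarith
  have hηpos : 0 < η := by rw [hη]; positivity
  set G : Fin n → EuclideanSpace ℝ (Fin d) → EuclideanSpace ℝ (Fin d) :=
    fun i => gradient (f i) with hG
  have hGfat : ∀ (i : Fin n) (z : EuclideanSpace ℝ (Fin d)), HasGradientAt (f i) (G i z) z :=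
    fun i z => ((hdiff i) z).hasGradientAt
  set Ga : EuclideanSpace ℝ (Fin d) → EuclideanSpace ℝ (Fin d) :=
    fun z => (1 / n : ℝ) • ∑ i, G i z with hGa
  have hsumG : ∀ z : EuclideanSpace ℝ (Fin d), ∑ i, G i z = (n : ℝ) • Ga z := by
    intro z
    rw [hGa]
    simp only []
    rw [smul_smul, mul_one_div, div_self hn0, one_smul]
  have hfavgn : ∀ z : EuclideanSpace ℝ (Fin d), ∑ i, f i z = (n : ℝ) * favg z := by
    intro z
    rw [hfavg z]
    field_simp
  have hGaat : ∀ z : EuclideanSpace ℝ (Fin d), HasGradientAt favg (Ga z) z := by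
    intro z
    have hsum : HasFDerivAt (fun w : EuclideanSpace ℝ (Fin d) => ∑ i, f i w)
        (∑ i, (InnerProductSpace.toDual ℝ (EuclideanSpace ℝ (Fin d))) (G i z)) z :=
      HasFDerivAt.fun_sum (fun i _ => (hGfat i z).hasFDerivAt)
    have hmul := hsum.const_mul ((1 : ℝ) / n)
    have hfe : favg = fun w : EuclideanSpace ℝ (Fin d) => (1 / n : ℝ) * ∑ i, f i w :=
      funext hfavg
    have hdual : (InnerProductSpace.toDual ℝ (EuclideanSpace ℝ (Fin d))) (Ga z)
        = (1 / n : ℝ) • ∑ i, (InnerProductSpace.toDual ℝ (EuclideanSpace ℝ (Fin d))) (G i z) := by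
      rw [hGa]
      simp only [map_smul, map_sum]
    rw [hasGradientAt_iff_hasFDerivAt, hdual, hfe]
    exact hmul
  have hfavgconv : ConvexOn ℝ Set.univ favg := by
    have hsumconv : ∀ s : Finset (Fin n),
        ConvexOn ℝ Set.univ (fun w : EuclideanSpace ℝ (Fin d) => ∑ i ∈ s, f i w) := by
      intro s
      induction s using Finset.induction_on with
      | empty => simpa using convexOn_const (0:ℝ) convex_univ
      | @insert a s ha ih =>
        simp only [Finset.sum_insert ha]
        exact (hconv a).add ih
    have h2 := (hsumconv Finset.univ).smul (by positivity : (0:ℝ) ≤ 1 / n)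
    have hfe : favg = fun w : EuclideanSpace ℝ (Fin d) => (1 / n : ℝ) • ∑ i, f i w := by
      funext w
      rw [hfavg w, smul_eq_mul]
    rw [hfe]
    exact h2
  have hGalip : ∀ p q : EuclideanSpace ℝ (Fin d), ‖Ga p - Ga q‖ ≤ L * ‖p - q‖ := by
    intro p q
    have h1 : Ga p - Ga q = (1 / n : ℝ) • ∑ i, (G i p - G i q) := by
      rw [hGa]
      simp only []
      rw [Finset.sum_sub_distrib, smul_sub]
    rw [h1, norm_smul, Real.norm_eq_abs, abs_of_nonneg (by positivity : (0:ℝ) ≤ 1 / n)]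
    have h2 : ‖∑ i, (G i p - G i q)‖ ≤ ∑ _i : Fin n, (L * ‖p - q‖) :=
      le_trans (norm_sum_le _ _) (Finset.sum_le_sum fun i _ => hlip i p q)
    rw [Finset.sum_const, Finset.card_univ, Fintype.card_fin, nsmul_eq_mul] at h2
    calc (1 / n : ℝ) * ‖∑ i, (G i p - G i q)‖
        ≤ (1 / n : ℝ) * ((n : ℝ) * (L * ‖p - q‖)) := by
          apply mul_le_mul_of_nonneg_left h2 (by positivity)
      _ = L * ‖p - q‖ := by field_simp
  have hGastar : Ga xstar = 0 := by
    have hloc : IsLocalMin favg xstar := Filter.Eventually.of_forall hmin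
    have hfd : fderiv ℝ favg xstar = 0 := hloc.fderiv_eq_zero
    have h2 : (InnerProductSpace.toDual ℝ (EuclideanSpace ℝ (Fin d))) (Ga xstar)
        = fderiv ℝ favg xstar := (hGaat xstar).hasFDerivAt.fderiv.symm
    apply (InnerProductSpace.toDual ℝ (EuclideanSpace ℝ (Fin d))).injective
    rw [h2, hfd, map_zero]
  have hstep' : ∀ (ω : Fin m → Fin n) (k : Fin m),
      x ω ((k : ℕ) + 1) = x ω (k : ℕ)
        - η • (G (ω k) (x ω (k : ℕ)) - G (ω k) xtprev + Ga xtprev) := by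
    intro ω k
    rw [hstep ω k, (hGaat xtprev).gradient]
  -- independence of x ω k from coordinates ≥ k
  have hindep : ∀ k, k ≤ m → ∀ ω ω' : Fin m → Fin n,
      (∀ j : Fin m, (j : ℕ) < k → ω j = ω' j) → x ω k = x ω' k := by
    intro k
    induction k with
    | zero => intro _ ω ω' _; rw [hx0, hx0]
    | succ k ih =>
      intro hk ω ω' hagree
      have hkm : k < m := Nat.lt_of_succ_le hk
      have hxk := ih (Nat.le_of_lt hkm) ω ω' (fun j hj => hagree j (Nat.lt_succ_of_lt hj))
      have h1 := hstep' ω ⟨k, hkm⟩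
      have h2 := hstep' ω' ⟨k, hkm⟩
      rw [h1, h2, hxk, hagree ⟨k, hkm⟩ (Nat.lt_succ_self k)]
  -- conditional expectation swap
  have hswap : ∀ (k : ℕ) (hk : k < m) (H : EuclideanSpace ℝ (Fin d) → Fin n → ℝ),
      ∑ ω : Fin m → Fin n, ∑ i : Fin n, H (x ω k) i
      = (n : ℝ) * ∑ ω : Fin m → Fin n, H (x ω k) (ω ⟨k, hk⟩) := by
    intro k hk H
    set j₀ : Fin m := ⟨k, hk⟩ with hj₀
    set e : Fin n × ({ j : Fin m // j ≠ j₀ } → Fin n) → (Fin m → Fin n) :=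
      fun p => (Equiv.funSplitAt j₀ (Fin n)).symm p with he
    have hee : ∀ (a : Fin n) r (j : Fin m) (hj : j ≠ j₀), e (a, r) j = r ⟨j, hj⟩ := by
      intro a r j hj
      rw [he]
      simp [Equiv.funSplitAt_symm_apply, hj]
    have hej : ∀ (a : Fin n) r, e (a, r) j₀ = a := by
      intro a r
      rw [he]
      simp [Equiv.funSplitAt_symm_apply]
    have hxe : ∀ (a a' : Fin n) (r : { j : Fin m // j ≠ j₀ } → Fin n),
        x (e (a, r)) k = x (e (a', r)) k := by
      intro a a' r
      apply hindep k (le_of_lt hk)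
      intro j hj
      have hjne : j ≠ j₀ := by
        intro hcon
        rw [hcon] at hj
        exact lt_irrefl _ hj
      rw [hee a r j hjne, hee a' r j hjne]
    calc ∑ ω : Fin m → Fin n, ∑ i : Fin n, H (x ω k) i
        = ∑ p : Fin n × ({ j : Fin m // j ≠ j₀ } → Fin n), ∑ i, H (x (e p) k) i := by
          exact (Equiv.sum_comp (Equiv.funSplitAt j₀ (Fin n)).symm
            (fun ω => ∑ i, H (x ω k) i)).symm
      _ = ∑ a : Fin n, ∑ r, ∑ i, H (x (e (a, r)) k) i := Fintype.sum_prod_type _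
      _ = ∑ _a : Fin n, ∑ r, ∑ i, H (x (e (i, r)) k) i := by
          refine Finset.sum_congr rfl fun a _ => Finset.sum_congr rfl fun r _ =>
            Finset.sum_congr rfl fun i _ => ?_
          rw [hxe a i r]
      _ = (n : ℝ) * ∑ r, ∑ i, H (x (e (i, r)) k) i := by
          rw [Finset.sum_const, Finset.card_univ, Fintype.card_fin, nsmul_eq_mul]
      _ = (n : ℝ) * ∑ i : Fin n, ∑ r, H (x (e (i, r)) k) i := by rw [Finset.sum_comm]
      _ = (n : ℝ) * ∑ p : Fin n × ({ j : Fin m // j ≠ j₀ } → Fin n),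
            H (x (e p) k) (e p j₀) := by
          rw [Fintype.sum_prod_type]
          congr 1
          refine Finset.sum_congr rfl fun a _ => Finset.sum_congr rfl fun r _ => ?_
          rw [hej a r]
      _ = (n : ℝ) * ∑ ω : Fin m → Fin n, H (x ω k) (ω j₀) := by
          congr 1
          exact Equiv.sum_comp (Equiv.funSplitAt j₀ (Fin n)).symm
            (fun ω => H (x ω k) (ω j₀))
  -- per-step expected inequality
  set C : ℝ := L * β * (β - 1) / 2 with hC
  set A : ℕ → ℝ := fun k => ∑ ω : Fin m → Fin n, (favg (x ω k) - favg xstar) with hA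
  set B : ℕ → ℝ := fun k => ∑ ω : Fin m → Fin n, ‖xstar - x ω k‖ ^ 2 with hB
  set Nr : ℝ := (Fintype.card (Fin m → Fin n) : ℝ) with hNr
  have hstepsum : ∀ (k : ℕ), k < m →
      (β - 1) * A (k + 1) + C * B (k + 1)
        ≤ 2 * A k + C * B k + Nr * (2 * (favg xtprev - favg xstar)) := by
    intro k hk
    set H : EuclideanSpace ℝ (Fin d) → Fin n → ℝ := fun y i =>
      (β - 1) * (favg (y - η • (G i y - G i xtprev + Ga xtprev)) - favg xstar)
        + C * ‖xstar - (y - η • (G i y - G i xtprev + Ga xtprev))‖ ^ 2 with hH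
    have hLHS : (β - 1) * A (k + 1) + C * B (k + 1)
        = ∑ ω : Fin m → Fin n, H (x ω k) (ω ⟨k, hk⟩) := by
      rw [hA, hB]
      simp only []
      rw [Finset.mul_sum, Finset.mul_sum, ← Finset.sum_add_distrib]
      refine Finset.sum_congr rfl fun ω _ => ?_
      rw [hH]
      simp only []
      rw [← hstep' ω ⟨k, hk⟩]
    have hub : ∀ ω : Fin m → Fin n, ∑ i, H (x ω k) i
        ≤ (n : ℝ) * (C * ‖xstar - x ω k‖ ^ 2 + 2 * (favg (x ω k) - favg xstar)
            + 2 * (favg xtprev - favg xstar)) := by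
      intro ω
      exact my_key hn' L β η hL hβ hη f G hGfat hconv hlip favg hfavgn Ga hsumG hGaat
        hfavgconv hGalip xstar hmin hGastar xtprev (x ω k)
    have hsum2 : ∑ ω : Fin m → Fin n, ∑ i, H (x ω k) i
        ≤ (n : ℝ) * (C * B k + 2 * A k + Nr * (2 * (favg xtprev - favg xstar))) := by
      calc ∑ ω : Fin m → Fin n, ∑ i, H (x ω k) i
          ≤ ∑ ω : Fin m → Fin n, (n : ℝ) * (C * ‖xstar - x ω k‖ ^ 2
              + 2 * (favg (x ω k) - favg xstar) + 2 * (favg xtprev - favg xstar)) :=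
            Finset.sum_le_sum fun ω _ => hub ω
        _ = (n : ℝ) * (C * B k + 2 * A k + Nr * (2 * (favg xtprev - favg xstar))) := by
            rw [← Finset.mul_sum]
            congr 1
            rw [Finset.sum_add_distrib, Finset.sum_add_distrib, ← Finset.mul_sum,
              ← Finset.mul_sum, Finset.sum_const, Finset.card_univ, nsmul_eq_mul, hA, hB, hNr]
    rw [hswap k hk H] at hsum2
    have := le_of_mul_le_mul_left hsum2 hn'
    rw [hLHS]
    linarith [this]
  -- telescoping sum over the epoch
  have htel : (β - 1) * ∑ k ∈ Finset.range m, A (k + 1)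
      ≤ 2 * ∑ k ∈ Finset.range m, A k + C * (B 0 - B m)
        + (m : ℝ) * (Nr * (2 * (favg xtprev - favg xstar))) := by
    have h1 : ∀ k ∈ Finset.range m,
        (β - 1) * A (k + 1) - 2 * A k + C * (B (k + 1) - B k)
          ≤ Nr * (2 * (favg xtprev - favg xstar)) := by
      intro k hkmem
      have hk := Finset.mem_range.mp hkmem
      have := hstepsum k hk
      linarith [this]
    have h2 := Finset.sum_le_sum h1
    rw [Finset.sum_const, Finset.card_range, nsmul_eq_mul] at h2
    have h3 : ∑ k ∈ Finset.range m,
        ((β - 1) * A (k + 1) - 2 * A k + C * (B (k + 1) - B k))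
        = (β - 1) * ∑ k ∈ Finset.range m, A (k + 1)
          - 2 * ∑ k ∈ Finset.range m, A k + C * (B m - B 0) := by
      rw [Finset.sum_add_distrib, Finset.sum_sub_distrib, ← Finset.mul_sum, ← Finset.mul_sum,
        ← Finset.mul_sum, Finset.sum_range_sub (fun k => B k)]
    rw [h3] at h2
    linarith [h2]
  -- Jensen step and final assembly
  have hM1 : (0:ℝ) < (m:ℝ) - 1 := by
    have h2 : (2:ℝ) ≤ (m:ℝ) := by exact_mod_cast hm
    linarith
  have hM1ne : ((m:ℝ) - 1) ≠ 0 := ne_of_gt hM1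
  have hcastm1 : ((m - 1 : ℕ) : ℝ) = (m : ℝ) - 1 := by
    have h1 : 1 ≤ m := by omega
    push_cast [Nat.cast_sub h1]
    ring
  set T : ℝ := ∑ ω : Fin m → Fin n, (favg (xt ω) - favg xstar) with hT
  have hjensen : T ≤ (1 / ((m:ℝ) - 1)) * ∑ k ∈ Finset.range (m - 1), A (k + 1) := by
    have hconstsum : ∑ _k ∈ Finset.range (m - 1), (1 / ((m:ℝ) - 1)) * favg xstar
        = favg xstar := by
      rw [Finset.sum_const, Finset.card_range, nsmul_eq_mul, hcastm1]
      field_simp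
    have hper : ∀ ω : Fin m → Fin n, favg (xt ω) - favg xstar
        ≤ ∑ k ∈ Finset.range (m - 1),
            (1 / ((m:ℝ) - 1)) * (favg (x ω (k + 1)) - favg xstar) := by
      intro ω
      have hw0 : ∀ k ∈ Finset.range (m - 1), (0:ℝ) ≤ 1 / ((m:ℝ) - 1) := fun _ _ => by positivity
      have hw1 : ∑ _k ∈ Finset.range (m - 1), (1 / ((m:ℝ) - 1)) = 1 := by
        rw [Finset.sum_const, Finset.card_range, nsmul_eq_mul, hcastm1]
        field_simp
      have hmem : ∀ k ∈ Finset.range (m - 1), x ω (k + 1) ∈ Set.univ :=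
        fun _ _ => Set.mem_univ _
      have hjj := hfavgconv.map_sum_le hw0 hw1 hmem
      have hxteq : xt ω = ∑ k ∈ Finset.range (m - 1), (1 / ((m:ℝ) - 1)) • x ω (k + 1) := by
        rw [hxt ω, Finset.smul_sum]
      rw [← hxteq] at hjj
      simp only [smul_eq_mul] at hjj
      calc favg (xt ω) - favg xstar
          ≤ (∑ k ∈ Finset.range (m - 1), (1 / ((m:ℝ) - 1)) * favg (x ω (k + 1)))
              - favg xstar := by linarith [hjj]
        _ = ∑ k ∈ Finset.range (m - 1),
              (1 / ((m:ℝ) - 1)) * (favg (x ω (k + 1)) - favg xstar) := by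
            simp only [mul_sub]
            rw [Finset.sum_sub_distrib, hconstsum]
    calc T ≤ ∑ ω : Fin m → Fin n, ∑ k ∈ Finset.range (m - 1),
            (1 / ((m:ℝ) - 1)) * (favg (x ω (k + 1)) - favg xstar) :=
          Finset.sum_le_sum fun ω _ => hper ω
      _ = ∑ k ∈ Finset.range (m - 1), (1 / ((m:ℝ) - 1)) * A (k + 1) := by
          rw [Finset.sum_comm]
          refine Finset.sum_congr rfl fun k _ => ?_
          rw [← Finset.mul_sum, hA]
      _ = (1 / ((m:ℝ) - 1)) * ∑ k ∈ Finset.range (m - 1), A (k + 1) :=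
          (Finset.mul_sum _ _ _).symm
  -- sum splitting
  have hmm : m - 1 + 1 = m := by omega
  set SA : ℝ := ∑ k ∈ Finset.range (m - 1), A (k + 1) with hSA
  have hsum_m : ∑ k ∈ Finset.range m, A (k + 1) = SA + A m := by
    rw [hSA]
    conv_lhs => rw [← hmm]
    rw [Finset.sum_range_succ, hmm]
  have hsum_m' : ∑ k ∈ Finset.range m, A k = SA + A 0 := by
    rw [hSA]
    conv_lhs => rw [← hmm]
    rw [Finset.sum_range_succ']
  have hβ3 : (0:ℝ) ≤ β - 3 := by linarith
  have hcore : (β - 3) * (((m:ℝ) - 1) * T) + (β - 1) * A m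
      ≤ 2 * ((m:ℝ) * (Nr * (favg xtprev - favg xstar))) + 2 * A 0 + C * (B 0 - B m) := by
    have h1 : (β - 3) * (((m:ℝ) - 1) * T) ≤ (β - 3) * SA := by
      apply mul_le_mul_of_nonneg_left _ hβ3
      calc ((m:ℝ) - 1) * T ≤ ((m:ℝ) - 1) * ((1 / ((m:ℝ) - 1)) * SA) :=
            mul_le_mul_of_nonneg_left hjensen (le_of_lt hM1)
        _ = SA := by field_simp
    rw [hsum_m, hsum_m'] at htel
    linarith [htel, h1]
  -- last rewriting
  have hNrpos : (0:ℝ) < Nr := by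
    rw [hNr]
    have hcard : 0 < Fintype.card (Fin m → Fin n) := Fintype.card_pos_iff.mpr
      ⟨fun _ => ⟨0, hn⟩⟩
    exact_mod_cast hcard
  have hNrne : Nr ≠ 0 := ne_of_gt hNrpos
  have hA0eq : A 0 = Nr * (favg x0 - favg xstar) := by
    rw [hA, hNr]
    simp only []
    rw [Finset.sum_congr rfl (fun ω _ => by rw [hx0 ω]), Finset.sum_const, Finset.card_univ,
      nsmul_eq_mul]
  have hB0eq : B 0 = Nr * ‖xstar - x0‖ ^ 2 := by
    rw [hB, hNr]
    simp only []
    rw [Finset.sum_congr rfl (fun ω _ => by rw [hx0 ω]), Finset.sum_const, Finset.card_univ,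
      nsmul_eq_mul]
  have hsum3 : ∑ ω : Fin m → Fin n, (‖xstar - x0‖ ^ 2 - ‖xstar - x ω m‖ ^ 2) = B 0 - B m := by
    rw [Finset.sum_sub_distrib, Finset.sum_const, Finset.card_univ, nsmul_eq_mul, hB0eq, hB,
      ← hNr]
  have hAm : ∑ ω : Fin m → Fin n, (favg (x ω m) - favg xstar) = A m := rfl
  rw [hAm, hsum3]
  have hP : (0:ℝ) < (β - 1) * (((m:ℝ) - 1) * Nr) := by positivity
  rw [← mul_le_mul_iff_left₀ hP]
  have e1 : ((1 - 2 / (β - 1)) * (Nr⁻¹ * T) + 1 / ((m:ℝ) - 1) * (Nr⁻¹ * A m))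
        * ((β - 1) * (((m:ℝ) - 1) * Nr))
      = (β - 3) * (((m:ℝ) - 1) * T) + (β - 1) * A m := by
    field_simp
    ring
  have e2 : (2 * (m:ℝ) / ((β - 1) * ((m:ℝ) - 1)) * (favg xtprev - favg xstar)
        + 2 / ((β - 1) * ((m:ℝ) - 1)) * (favg x0 - favg xstar)
        + L * β / (2 * ((m:ℝ) - 1)) * (Nr⁻¹ * (B 0 - B m)))
        * ((β - 1) * (((m:ℝ) - 1) * Nr))
      = 2 * ((m:ℝ) * (Nr * (favg xtprev - favg xstar))) + 2 * A 0 + C * (B 0 - B m) := by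
    rw [hA0eq, hC]
    field_simp
  rw [e1, e2]
  exact hcore
end
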